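/- arXiv:1201.3569 — 7 statements merged into one kernel-verified Lean document; each statement's English description precedes it below -/
import Mathlib

section
/- Let ξ_0, …, ξ_{n−1} be i.i.d. real random variables such that E exp(c^{−α}|ξ_i|^α) ≤ 2, where α ∈ (0,1] and c > 0. Set M = c·(3α^{−2} log n)^{1/α} (with the convention log n := log(max(n, e))) and Y_i = ξ_i·1_{|ξ_i| > M}. Then for every λ with 0 ≤ λ ≤ 1/(2^{1/α} c), E exp( λ^α · Σ_{i=0}^{n−1} (|Y_i| + E|Y_i|)^α ) ≤ exp(8). -/
open MeasureTheory ProbabilityTheory Real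
open scoped NNReal ENNReal


lemma aux_rpow_add_le (x y : ℝ) (p : ℝ) (hx : 0 ≤ x) (hy : 0 ≤ y) (hp : 0 ≤ p) (hp1 : p ≤ 1) :
    (x + y) ^ p ≤ x ^ p + y ^ p := by
  have h := NNReal.rpow_add_le_add_rpow x.toNNReal y.toNNReal hp hp1
  have hx' : ((x.toNNReal : ℝ)) = x := Real.coe_toNNReal x hx
  have hy' : ((y.toNNReal : ℝ)) = y := Real.coe_toNNReal y hy
  calc (x + y) ^ p = ((x.toNNReal + y.toNNReal : ℝ≥0) : ℝ) ^ p := by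
        rw [NNReal.coe_add, hx', hy']
    _ = (((x.toNNReal + y.toNNReal) ^ p : ℝ≥0) : ℝ) := by
        rw [NNReal.coe_rpow]
    _ ≤ ((x.toNNReal ^ p + y.toNNReal ^ p : ℝ≥0) : ℝ) := by
        exact_mod_cast h
    _ = x ^ p + y ^ p := by
        rw [NNReal.coe_add, NNReal.coe_rpow, NNReal.coe_rpow, hx', hy']

lemma aux_numeric {t L N : ℝ} (ht : 1 ≤ t) (hL : 1 ≤ L) (hN0 : 0 ≤ N) (hN : N ≤ Real.exp L) :
    N * (3 * t ^ 2 * L * Real.exp (-(3 * t * L) / 2)) ≤ 6 := by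
  have ht0 : (0:ℝ) ≤ t := by linarith
  have h1 : L ≤ 2 * Real.exp (L / 2 - 1) := by
    have := Real.add_one_le_exp (L / 2 - 1); linarith
  have h2 : t ≤ (4 / 3) * Real.exp ((3 * t) / 4 - 1) := by
    have := Real.add_one_le_exp ((3 * t) / 4 - 1); linarith
  have h2' : t ^ 2 ≤ (16 / 9) * Real.exp ((3 * t) / 2 - 2) := by
    have hsq : t ^ 2 ≤ ((4 / 3) * Real.exp ((3 * t) / 4 - 1)) ^ 2 := by
      apply pow_le_pow_left₀ ht0 h2
    have hee : Real.exp ((3 * t) / 4 - 1) * Real.exp ((3 * t) / 4 - 1)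
        = Real.exp ((3 * t) / 2 - 2) := by
      rw [← Real.exp_add]; ring_nf
    calc t ^ 2 ≤ ((4 / 3) * Real.exp ((3 * t) / 4 - 1)) ^ 2 := hsq
      _ = (16 / 9) * (Real.exp ((3 * t) / 4 - 1) * Real.exp ((3 * t) / 4 - 1)) := by ring
      _ = (16 / 9) * Real.exp ((3 * t) / 2 - 2) := by rw [hee]
  have hE : (0:ℝ) < Real.exp (-(3 * t * L) / 2) := Real.exp_pos _
  have hX0 : 0 ≤ 3 * t ^ 2 * L * Real.exp (-(3 * t * L) / 2) := by positivity
  have step1 : N * (3 * t ^ 2 * L * Real.exp (-(3 * t * L) / 2))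
      ≤ Real.exp L * (3 * t ^ 2 * L * Real.exp (-(3 * t * L) / 2)) := by
    exact mul_le_mul_of_nonneg_right hN hX0
  have inner : 3 * t ^ 2 * L ≤ 3 * ((16 / 9) * Real.exp ((3 * t) / 2 - 2)) *
      (2 * Real.exp (L / 2 - 1)) := by
    have := mul_le_mul h2' h1 (by linarith) (by positivity)
    nlinarith [this]
  have step2 : Real.exp L * (3 * t ^ 2 * L * Real.exp (-(3 * t * L) / 2))
      ≤ Real.exp L * (3 * ((16 / 9) * Real.exp ((3 * t) / 2 - 2)) *
        (2 * Real.exp (L / 2 - 1)) * Real.exp (-(3 * t * L) / 2)) := by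
    apply mul_le_mul_of_nonneg_left _ (Real.exp_pos L).le
    exact mul_le_mul_of_nonneg_right inner hE.le
  have eqexp : Real.exp L * (3 * ((16 / 9) * Real.exp ((3 * t) / 2 - 2)) *
        (2 * Real.exp (L / 2 - 1)) * Real.exp (-(3 * t * L) / 2))
      = (32 / 3) * Real.exp (L + ((3 * t) / 2 - 2) + (L / 2 - 1) + (-(3 * t * L) / 2)) := by
    rw [Real.exp_add, Real.exp_add, Real.exp_add]; ring
  have hexple : L + ((3 * t) / 2 - 2) + (L / 2 - 1) + (-(3 * t * L) / 2) ≤ -(3 / 2) := by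
    nlinarith [mul_nonneg (sub_nonneg.2 ht) (sub_nonneg.2 hL)]
  have step3 : (32 / 3 : ℝ) * Real.exp (L + ((3 * t) / 2 - 2) + (L / 2 - 1) + (-(3 * t * L) / 2))
      ≤ (32 / 3) * Real.exp (-(3 / 2)) := by
    apply mul_le_mul_of_nonneg_left (Real.exp_le_exp.2 hexple) (by norm_num)
  have final : (32 / 3 : ℝ) * Real.exp (-(3 / 2)) ≤ 6 := by
    have h5 : (5 / 2 : ℝ) ≤ Real.exp (3 / 2) := by
      have := Real.add_one_le_exp (3 / 2 : ℝ); linarith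
    rw [Real.exp_neg]
    have hpos : (0:ℝ) < Real.exp (3 / 2) := Real.exp_pos _
    have hinv : (Real.exp (3 / 2))⁻¹ ≤ (5 / 2 : ℝ)⁻¹ := by
      apply inv_anti₀ (by norm_num) h5
    nlinarith
  linarith [step1, step2, eqexp ▸ step2, step3, final]

lemma aux_lintegral_prod_indep {Ω : Type*} [MeasurableSpace Ω] {P : Measure Ω}
    [IsProbabilityMeasure P] {ι : Type*} (F : ι → Ω → ℝ≥0∞) (hF : ∀ i, Measurable (F i))
    (hind : iIndepFun F P) (s : Finset ι) :
    ∫⁻ ω, ∏ i ∈ s, F i ω ∂P = ∏ i ∈ s, ∫⁻ ω, F i ω ∂P := by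
  classical
  induction s using Finset.induction_on with
  | empty => simp
  | @insert i s hi ih =>
    rw [Finset.prod_insert hi]
    have hdep : IndepFun (F i) (∏ j ∈ s, F j) P :=
      (hind.indepFun_finsetProd_of_notMem hF hi).symm
    have hms : Measurable (∏ j ∈ s, F j) := by
      rw [show (∏ j ∈ s, F j) = fun ω => ∏ j ∈ s, F j ω from funext fun ω => by
        simp [Finset.prod_apply]]
      exact Finset.measurable_prod _ fun j _ => hF j
    have key := lintegral_mul_eq_lintegral_mul_lintegral_of_indepFun (hF i) hms hdep
    calc ∫⁻ ω, ∏ j ∈ insert i s, F j ω ∂P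
        = ∫⁻ ω, F i ω * ∏ j ∈ s, F j ω ∂P :=
          lintegral_congr fun ω => by rw [Finset.prod_insert hi]
      _ = ∫⁻ ω, (F i * ∏ j ∈ s, F j) ω ∂P :=
          lintegral_congr fun ω => by simp [Finset.prod_apply]
      _ = (∫⁻ ω, F i ω ∂P) * ∫⁻ ω, (∏ j ∈ s, F j) ω ∂P := key
      _ = (∫⁻ ω, F i ω ∂P) * ∫⁻ ω, ∏ j ∈ s, F j ω ∂P := by
          congr 1; exact lintegral_congr fun ω => by simp [Finset.prod_apply]
      _ = (∫⁻ ω, F i ω ∂P) * ∏ j ∈ s, ∫⁻ ω, F j ω ∂P := by rw [ih]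


set_option maxHeartbeats 2000000 in
/-- Truncation lemma: if `ξ_0, …, ξ_{n−1}` are i.i.d. with
`E exp(c^{−α}|ξ_i|^α) ≤ 2`, `α ∈ (0,1]`, `c > 0`,
`M = c (3 α^{−2} log n)^{1/α}` (with `log n := log (max n e)`) and
`Y_i = ξ_i 1_{|ξ_i| > M}`, then for every `0 ≤ λ ≤ 1/(2^{1/α} c)`,
`E exp(λ^α Σ_{i<n} (|Y_i| + E|Y_i|)^α) ≤ e^8`. -/
theorem stmt_1 {Ω : Type*} [MeasurableSpace Ω] (P : Measure Ω) [IsProbabilityMeasure P]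
    (n : ℕ) (hn : 0 < n) (α c : ℝ) (hα : 0 < α) (hα1 : α ≤ 1) (hc : 0 < c)
    (ξ : Fin n → Ω → ℝ) (hmeas : ∀ i, Measurable (ξ i))
    (hindep : iIndepFun ξ P)
    (hident : ∀ i j, IdentDistrib (ξ i) (ξ j) P P)
    (hψ : ∀ i, ∫⁻ ω, ENNReal.ofReal (Real.exp (|ξ i ω| ^ α / c ^ α)) ∂P ≤ 2)
    (M : ℝ) (hM : M = c * (3 * α⁻¹ ^ 2 * Real.log (max (n : ℝ) (Real.exp 1))) ^ (1 / α))
    (Y : Fin n → Ω → ℝ) (hY : ∀ i ω, Y i ω = if M < |ξ i ω| then ξ i ω else 0)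
    (lam : ℝ) (hlam0 : 0 ≤ lam) (hlam : lam ≤ 1 / ((2 : ℝ) ^ (1 / α) * c)) :
    ∫⁻ ω, ENNReal.ofReal
        (Real.exp (lam ^ α * ∑ i : Fin n, (|Y i ω| + ∫ ω', |Y i ω'| ∂P) ^ α)) ∂P
      ≤ ENNReal.ofReal (Real.exp 8) := by
  obtain rfl : Y = fun i ω => if M < |ξ i ω| then ξ i ω else 0 :=
    funext fun i => funext fun ω => hY i ω
  set L := Real.log (max (n : ℝ) (Real.exp 1)) with hLdef
  have hmaxpos : (0:ℝ) < max (n : ℝ) (Real.exp 1) :=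
    lt_of_lt_of_le (Real.exp_pos 1) (le_max_right _ _)
  have hL1 : 1 ≤ L := by
    have h := Real.log_le_log (Real.exp_pos 1) (le_max_right (n:ℝ) (Real.exp 1))
    rwa [Real.log_exp] at h
  have hnL : (n : ℝ) ≤ Real.exp L := by
    rw [hLdef, Real.exp_log hmaxpos]
    exact le_max_left _ _
  set t := α⁻¹ with htdef
  have ht1 : 1 ≤ t := by
    rw [htdef]
    exact one_le_inv_iff₀.mpr ⟨hα, hα1⟩
  have htα : α * t = 1 := mul_inv_cancel₀ hα.ne'
  set A := 3 * t ^ 2 * L with hAdef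
  have hA0 : (0:ℝ) < A := by nlinarith
  have hA3 : (3:ℝ) ≤ A := by nlinarith
  have hαA2 : α * A = 3 * t * L := by
    rw [hAdef]; linear_combination (3 * t * L) * htα
  have hαA : (3:ℝ) ≤ α * A := by rw [hαA2]; nlinarith
  have hM0 : 0 ≤ M := by
    rw [hM]; positivity
  have hcα : (0:ℝ) < c ^ α := Real.rpow_pos_of_pos hc α
  have hMα : M ^ α = c ^ α * A := by
    rw [hM, Real.mul_rpow hc.le (Real.rpow_nonneg hA0.le _),
      ← Real.rpow_mul hA0.le, one_div_mul_cancel hα.ne', Real.rpow_one]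
  have hlam2 : lam ^ α ≤ 1 / (2 * c ^ α) := by
    have h1 : lam ^ α ≤ (1 / ((2:ℝ) ^ (1/α) * c)) ^ α := Real.rpow_le_rpow hlam0 hlam hα.le
    have h2 : ((1:ℝ) / ((2:ℝ) ^ (1/α) * c)) ^ α = 1 / (2 * c ^ α) := by
      rw [Real.div_rpow (by norm_num) (by positivity), Real.one_rpow,
        Real.mul_rpow (by positivity) hc.le, ← Real.rpow_mul (by norm_num : (0:ℝ) ≤ 2),
        one_div_mul_cancel hα.ne', Real.rpow_one, one_div]
    rw [h2] at h1; exact h1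
  have hlamα0 : 0 ≤ lam ^ α := Real.rpow_nonneg hlam0 _
  -- measurability
  have hYmeas : ∀ i, Measurable (fun ω => if M < |ξ i ω| then ξ i ω else 0) := fun i =>
    Measurable.ite (measurableSet_lt measurable_const (hmeas i).abs) (hmeas i) measurable_const
  have hRmeas : ∀ i, Measurable fun ω => Real.exp (|ξ i ω| ^ α / c ^ α) := fun i =>
    (((Real.continuous_rpow_const hα.le).measurable.comp (hmeas i).abs).div_const _).exp
  -- A ≤ u whenever M < |ξ|
  have hAu : ∀ i ω, M < |ξ i ω| → A ≤ |ξ i ω| ^ α / c ^ α := by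
    intro i ω h
    have h1 : M ^ α ≤ |ξ i ω| ^ α := Real.rpow_le_rpow hM0 h.le hα.le
    rw [hMα] at h1
    rw [le_div_iff₀ hcα]
    nlinarith
  -- pointwise bound on |Y|
  have hYb : ∀ i ω, |if M < |ξ i ω| then ξ i ω else 0|
      ≤ M * Real.exp (-(A/2)) * Real.exp (|ξ i ω| ^ α / c ^ α) := by
    intro i ω
    by_cases h : M < |ξ i ω|
    · rw [if_pos h]
      have hu := hAu i ω h
      have hx0 : (0:ℝ) < |ξ i ω| := lt_of_le_of_lt hM0 h
      set u := |ξ i ω| ^ α / c ^ α with hudef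
      have hu0 : (0:ℝ) < u := lt_of_lt_of_le hA0 hu
      have hxu : |ξ i ω| = c * u ^ (1/α) := by
        have h1 : |ξ i ω| ^ α = c ^ α * u := by rw [hudef]; field_simp
        have h2 : (|ξ i ω| ^ α) ^ (1/α) = |ξ i ω| := by
          rw [one_div, Real.rpow_rpow_inv hx0.le hα.ne']
        rw [← h2, h1, Real.mul_rpow hcα.le hu0.le, one_div,
          Real.rpow_rpow_inv hc.le hα.ne']
      have hr : (u / A) ^ (1/α) ≤ Real.exp (u - A / 2) := by
        rw [Real.rpow_def_of_pos (by positivity : (0:ℝ) < u / A)]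
        apply Real.exp_le_exp.2
        have hlog : Real.log (u / A) ≤ u / A - 1 := Real.log_le_sub_one_of_pos (by positivity)
        have h3 : Real.log (u/A) * (1/α) ≤ (u/A - 1) * (1/α) :=
          mul_le_mul_of_nonneg_right hlog (by positivity)
        have h4 : (u/A - 1) * (1/α) = (u - A) / (α * A) := by
          field_simp
        have h5 : (u - A) / (α * A) ≤ (u - A) / 2 := by
          apply div_le_div_of_nonneg_left (by linarith) (by norm_num) (by linarith)
        have h6 : (u - A) / 2 ≤ u - A / 2 := by linarith
        calc Real.log (u/A) * (1/α) ≤ (u/A - 1) * (1/α) := h3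
          _ = (u - A) / (α * A) := h4
          _ ≤ (u - A) / 2 := h5
          _ ≤ u - A / 2 := h6
      have humono : u ^ (1/α) = A ^ (1/α) * (u/A) ^ (1/α) := by
        rw [← Real.mul_rpow hA0.le (by positivity), mul_div_cancel₀ _ hA0.ne']
      have hAα : (0:ℝ) ≤ A ^ (1/α) := Real.rpow_nonneg hA0.le _
      calc |ξ i ω| = c * u ^ (1/α) := hxu
        _ = c * (A ^ (1/α) * (u/A) ^ (1/α)) := by rw [humono]
        _ ≤ c * (A ^ (1/α) * Real.exp (u - A/2)) := by
            apply mul_le_mul_of_nonneg_left _ hc.le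
            exact mul_le_mul_of_nonneg_left hr hAα
        _ = (c * (3 * t ^ 2 * L) ^ (1/α)) * (Real.exp (-(A/2)) * Real.exp u) := by
            rw [← Real.exp_add, ← hAdef]; ring_nf
        _ = M * Real.exp (-(A/2)) * Real.exp u := by rw [← hM]; ring
    · rw [if_neg h, abs_zero]
      positivity
  -- pointwise exponential bound
  have hEb : ∀ i ω, Real.exp (lam ^ α * |if M < |ξ i ω| then ξ i ω else 0| ^ α)
      ≤ 1 + Real.exp (-(A/2)) * Real.exp (|ξ i ω| ^ α / c ^ α) := by
    intro i ω
    by_cases h : M < |ξ i ω|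
    · rw [if_pos h]
      have hu := hAu i ω h
      have h1 : lam ^ α * |ξ i ω| ^ α ≤ (|ξ i ω| ^ α / c ^ α) / 2 := by
        have h0 : 0 ≤ |ξ i ω| ^ α := Real.rpow_nonneg (abs_nonneg _) α
        have := mul_le_mul_of_nonneg_right hlam2 h0
        calc lam ^ α * |ξ i ω| ^ α ≤ (1/(2 * c ^ α)) * |ξ i ω| ^ α := this
          _ = (|ξ i ω| ^ α / c ^ α) / 2 := by
              rw [div_div]
              rw [one_div, inv_mul_eq_div, mul_comm (c ^ α) 2]
      have h2 : (|ξ i ω| ^ α / c ^ α) / 2 ≤ |ξ i ω| ^ α / c ^ α - A/2 := by linarith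
      calc Real.exp (lam ^ α * |ξ i ω| ^ α)
          ≤ Real.exp (|ξ i ω| ^ α / c ^ α - A/2) := Real.exp_le_exp.2 (h1.trans h2)
        _ = Real.exp (-(A/2)) * Real.exp (|ξ i ω| ^ α / c ^ α) := by
            rw [← Real.exp_add]; ring_nf
        _ ≤ 1 + Real.exp (-(A/2)) * Real.exp (|ξ i ω| ^ α / c ^ α) := by
            linarith
    · rw [if_neg h, abs_zero, Real.zero_rpow hα.ne', mul_zero, Real.exp_zero]
      have : 0 ≤ Real.exp (-(A/2)) * Real.exp (|ξ i ω| ^ α / c ^ α) := by positivity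
      linarith
  -- integrability of exp(|ξ|^α/c^α)
  have hRint : ∀ i, Integrable (fun ω => Real.exp (|ξ i ω| ^ α / c ^ α)) P := by
    intro i
    refine ⟨(hRmeas i).aestronglyMeasurable, ?_⟩
    have hb : ∫⁻ ω, ‖Real.exp (|ξ i ω| ^ α / c ^ α)‖ₑ ∂P ≤ 2 := by
      simp_rw [Real.enorm_eq_ofReal (Real.exp_pos _).le]
      exact hψ i
    exact lt_of_le_of_lt hb (by norm_num)
  have hRval : ∀ i, ∫ ω, Real.exp (|ξ i ω| ^ α / c ^ α) ∂P ≤ 2 := by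
    intro i
    rw [MeasureTheory.integral_eq_lintegral_of_nonneg_ae
      (ae_of_all _ fun ω => (Real.exp_pos _).le) (hRmeas i).aestronglyMeasurable]
    calc (∫⁻ ω, ENNReal.ofReal (Real.exp (|ξ i ω| ^ α / c ^ α)) ∂P).toReal
        ≤ (2 : ℝ≥0∞).toReal := ENNReal.toReal_mono (by norm_num) (hψ i)
      _ = 2 := by norm_num
  -- bound on the mean of |Y i|
  have hm0 : ∀ i, 0 ≤ ∫ ω', |if M < |ξ i ω'| then ξ i ω' else 0| ∂P := fun i =>
    integral_nonneg fun ω => abs_nonneg _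
  have hmi : ∀ i, (∫ ω', |if M < |ξ i ω'| then ξ i ω' else 0| ∂P)
      ≤ 2 * (M * Real.exp (-(A/2))) := by
    intro i
    calc (∫ ω', |if M < |ξ i ω'| then ξ i ω' else 0| ∂P)
        ≤ ∫ ω', M * Real.exp (-(A/2)) * Real.exp (|ξ i ω'| ^ α / c ^ α) ∂P :=
          integral_mono_of_nonneg (ae_of_all _ fun ω => abs_nonneg _)
            ((hRint i).const_mul _) (ae_of_all _ fun ω => hYb i ω)
      _ = M * Real.exp (-(A/2)) * ∫ ω', Real.exp (|ξ i ω'| ^ α / c ^ α) ∂P :=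
          integral_const_mul _ _
      _ ≤ M * Real.exp (-(A/2)) * 2 :=
          mul_le_mul_of_nonneg_left (hRval i) (by positivity)
      _ = 2 * (M * Real.exp (-(A/2))) := by ring
  -- deterministic per-index bound
  have hdet : ∀ i, lam ^ α * (∫ ω', |if M < |ξ i ω'| then ξ i ω' else 0| ∂P) ^ α
      ≤ A * Real.exp (-(α*A)/2) := by
    intro i
    have h1 : (∫ ω', |if M < |ξ i ω'| then ξ i ω' else 0| ∂P) ^ α
        ≤ (2 * (M * Real.exp (-(A/2)))) ^ α :=
      Real.rpow_le_rpow (hm0 i) (hmi i) hα.le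
    have h2 : ((2:ℝ) * (M * Real.exp (-(A/2)))) ^ α
        = 2 ^ α * (c ^ α * A * Real.exp (-(α*A)/2)) := by
      rw [Real.mul_rpow (by norm_num) (by positivity),
        Real.mul_rpow hM0 (Real.exp_pos _).le, hMα, ← Real.exp_mul]
      ring_nf
    have h2α : (2:ℝ) ^ α ≤ 2 := by
      calc (2:ℝ) ^ α ≤ (2:ℝ) ^ (1:ℝ) := Real.rpow_le_rpow_of_exponent_le one_le_two hα1
        _ = 2 := Real.rpow_one 2
    have hE0 : (0:ℝ) < Real.exp (-(α*A)/2) := Real.exp_pos _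
    calc lam ^ α * (∫ ω', |if M < |ξ i ω'| then ξ i ω' else 0| ∂P) ^ α
        ≤ (1 / (2 * c ^ α)) * (2 ^ α * (c ^ α * A * Real.exp (-(α*A)/2))) := by
          apply mul_le_mul hlam2 (h1.trans_eq h2) (Real.rpow_nonneg (hm0 i) α) (by positivity)
      _ = (2 ^ α / 2) * (A * Real.exp (-(α*A)/2)) := by field_simp
      _ ≤ 1 * (A * Real.exp (-(α*A)/2)) := by
          apply mul_le_mul_of_nonneg_right _ (by positivity)
          linarith
      _ = A * Real.exp (-(α*A)/2) := one_mul _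
  -- sum of deterministic terms is at most 6
  have hD6 : (∑ i : Fin n, lam ^ α * (∫ ω', |if M < |ξ i ω'| then ξ i ω' else 0| ∂P) ^ α) ≤ 6 := by
    calc (∑ i : Fin n, lam ^ α * (∫ ω', |if M < |ξ i ω'| then ξ i ω' else 0| ∂P) ^ α)
        ≤ ∑ _i : Fin n, A * Real.exp (-(α*A)/2) := Finset.sum_le_sum fun i _ => hdet i
      _ = (n : ℝ) * (A * Real.exp (-(α*A)/2)) := by
          rw [Finset.sum_const, Finset.card_univ, Fintype.card_fin, nsmul_eq_mul]
      _ ≤ 6 := by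
          have haux := aux_numeric ht1 hL1 (Nat.cast_nonneg n) hnL
          have he : -(α*A)/2 = -(3*t*L)/2 := by rw [hαA2]
          rw [he, hAdef]
          exact haux
  -- the ENNReal-valued factors
  set F : Fin n → Ω → ℝ≥0∞ := fun i ω =>
    ENNReal.ofReal (Real.exp (lam ^ α * |if M < |ξ i ω| then ξ i ω else 0| ^ α)) with hFdef
  have hg : Measurable (fun x : ℝ => if M < |x| then x else 0) :=
    Measurable.ite (measurableSet_lt measurable_const measurable_abs) measurable_id
      measurable_const
  have hgm : Measurable (fun x : ℝ =>
      ENNReal.ofReal (Real.exp (lam ^ α * |if M < |x| then x else 0| ^ α))) := by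
    apply Measurable.ennreal_ofReal
    apply Measurable.exp
    exact ((Real.continuous_rpow_const hα.le).measurable.comp hg.abs).const_mul _
  have hFmeas : ∀ i, Measurable (F i) := fun i => hgm.comp (hmeas i)
  have hFind : iIndepFun F P :=
    hindep.comp (fun _ x => ENNReal.ofReal (Real.exp (lam ^ α * |if M < |x| then x else 0| ^ α)))
      (fun _ => hgm)
  -- per-factor bound
  have hFint : ∀ i, ∫⁻ ω, F i ω ∂P ≤ ENNReal.ofReal (1 + 2 * Real.exp (-(A/2))) := by
    intro i
    have hb : ∀ ω, F i ω ≤ ENNReal.ofReal 1 + ENNReal.ofReal (Real.exp (-(A/2)))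
        * ENNReal.ofReal (Real.exp (|ξ i ω| ^ α / c ^ α)) := by
      intro ω
      calc F i ω ≤ ENNReal.ofReal (1 + Real.exp (-(A/2)) * Real.exp (|ξ i ω| ^ α / c ^ α)) :=
            ENNReal.ofReal_le_ofReal (hEb i ω)
        _ = _ := by
            rw [ENNReal.ofReal_add (by norm_num) (by positivity),
              ENNReal.ofReal_mul (Real.exp_pos _).le]
    calc ∫⁻ ω, F i ω ∂P
        ≤ ∫⁻ ω, (ENNReal.ofReal 1 + ENNReal.ofReal (Real.exp (-(A/2)))
            * ENNReal.ofReal (Real.exp (|ξ i ω| ^ α / c ^ α))) ∂P := lintegral_mono hb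
      _ = ENNReal.ofReal 1 + ENNReal.ofReal (Real.exp (-(A/2)))
            * ∫⁻ ω, ENNReal.ofReal (Real.exp (|ξ i ω| ^ α / c ^ α)) ∂P := by
          rw [lintegral_add_left measurable_const,
            lintegral_const_mul _ ((hRmeas i).ennreal_ofReal), lintegral_const,
            measure_univ, mul_one]
      _ ≤ ENNReal.ofReal 1 + ENNReal.ofReal (Real.exp (-(A/2))) * 2 :=
          add_le_add le_rfl (mul_le_mul_right (hψ i) _)
      _ = ENNReal.ofReal (1 + 2 * Real.exp (-(A/2))) := by
          rw [show (2:ℝ≥0∞) = ENNReal.ofReal 2 by norm_num,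
            ← ENNReal.ofReal_mul (Real.exp_pos _).le,
            ← ENNReal.ofReal_add (by norm_num) (by positivity), mul_comm]
  -- product of the factor bounds
  have hprod : (∏ i : Fin n, ∫⁻ ω, F i ω ∂P) ≤ ENNReal.ofReal (Real.exp 2) := by
    have hδ0 : (0:ℝ) ≤ 2 * Real.exp (-(A/2)) := by positivity
    calc (∏ i : Fin n, ∫⁻ ω, F i ω ∂P)
        ≤ ∏ _i : Fin n, ENNReal.ofReal (1 + 2 * Real.exp (-(A/2))) :=
          Finset.prod_le_prod' fun i _ => hFint i
      _ = ENNReal.ofReal (1 + 2 * Real.exp (-(A/2))) ^ n := by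
          rw [Finset.prod_const, Finset.card_univ, Fintype.card_fin]
      _ = ENNReal.ofReal ((1 + 2 * Real.exp (-(A/2))) ^ n) :=
          (ENNReal.ofReal_pow (by positivity) n).symm
      _ ≤ ENNReal.ofReal (Real.exp 2) := by
          apply ENNReal.ofReal_le_ofReal
          have h1 : 1 + 2 * Real.exp (-(A/2)) ≤ Real.exp (2 * Real.exp (-(A/2))) := by
            have := Real.add_one_le_exp (2 * Real.exp (-(A/2))); linarith
          have h2 : (1 + 2 * Real.exp (-(A/2))) ^ n ≤ Real.exp (2 * Real.exp (-(A/2))) ^ n :=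
            pow_le_pow_left₀ (by positivity) h1 n
          have h3 : Real.exp (2 * Real.exp (-(A/2))) ^ n = Real.exp (n * (2 * Real.exp (-(A/2)))) := by
            rw [← Real.exp_nat_mul]
          have hnd : (n:ℝ) * Real.exp (-(A/2)) ≤ 1 := by
            have hLa : -(A/2) ≤ -L := by nlinarith
            calc (n:ℝ) * Real.exp (-(A/2)) ≤ Real.exp L * Real.exp (-L) :=
                mul_le_mul hnL (Real.exp_le_exp.2 hLa) (Real.exp_pos _).le (Real.exp_pos _).le
              _ = 1 := by rw [← Real.exp_add]; simp
          have h4 : (n:ℝ) * (2 * Real.exp (-(A/2))) ≤ 2 := by nlinarith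
          calc (1 + 2 * Real.exp (-(A/2))) ^ n ≤ Real.exp ((n:ℝ) * (2 * Real.exp (-(A/2)))) :=
              h2.trans_eq h3
            _ ≤ Real.exp 2 := Real.exp_le_exp.2 h4
  -- main chain
  set D : ℝ := ∑ i : Fin n, lam ^ α * (∫ ω', |if M < |ξ i ω'| then ξ i ω' else 0| ∂P) ^ α
    with hDdef
  have hptwise : ∀ ω, ENNReal.ofReal (Real.exp (lam ^ α *
      ∑ i : Fin n, (|if M < |ξ i ω| then ξ i ω else 0|
        + ∫ ω', |if M < |ξ i ω'| then ξ i ω' else 0| ∂P) ^ α))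
      ≤ (∏ i : Fin n, F i ω) * ENNReal.ofReal (Real.exp D) := by
    intro ω
    have hre : lam ^ α * ∑ i : Fin n, (|if M < |ξ i ω| then ξ i ω else 0|
        + ∫ ω', |if M < |ξ i ω'| then ξ i ω' else 0| ∂P) ^ α
        ≤ (∑ i : Fin n, lam ^ α * |if M < |ξ i ω| then ξ i ω else 0| ^ α) + D := by
      rw [hDdef, Finset.mul_sum, ← Finset.sum_add_distrib]
      apply Finset.sum_le_sum
      intro i _
      have h := aux_rpow_add_le (|if M < |ξ i ω| then ξ i ω else 0|)
        (∫ ω', |if M < |ξ i ω'| then ξ i ω' else 0| ∂P) α (abs_nonneg _) (hm0 i) hα.le hα1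
      calc lam ^ α * (|if M < |ξ i ω| then ξ i ω else 0|
            + ∫ ω', |if M < |ξ i ω'| then ξ i ω' else 0| ∂P) ^ α
          ≤ lam ^ α * (|if M < |ξ i ω| then ξ i ω else 0| ^ α
            + (∫ ω', |if M < |ξ i ω'| then ξ i ω' else 0| ∂P) ^ α) :=
            mul_le_mul_of_nonneg_left h hlamα0
        _ = lam ^ α * |if M < |ξ i ω| then ξ i ω else 0| ^ α
            + lam ^ α * (∫ ω', |if M < |ξ i ω'| then ξ i ω' else 0| ∂P) ^ α := mul_add _ _ _
    calc ENNReal.ofReal (Real.exp (lam ^ α * ∑ i : Fin n, (|if M < |ξ i ω| then ξ i ω else 0|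
          + ∫ ω', |if M < |ξ i ω'| then ξ i ω' else 0| ∂P) ^ α))
        ≤ ENNReal.ofReal (Real.exp ((∑ i : Fin n,
            lam ^ α * |if M < |ξ i ω| then ξ i ω else 0| ^ α) + D)) :=
          ENNReal.ofReal_le_ofReal (Real.exp_le_exp.2 hre)
      _ = ENNReal.ofReal (Real.exp (∑ i : Fin n,
            lam ^ α * |if M < |ξ i ω| then ξ i ω else 0| ^ α) * Real.exp D) := by
          rw [Real.exp_add]
      _ = ENNReal.ofReal (Real.exp (∑ i : Fin n,
            lam ^ α * |if M < |ξ i ω| then ξ i ω else 0| ^ α)) * ENNReal.ofReal (Real.exp D) :=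
          ENNReal.ofReal_mul (Real.exp_pos _).le
      _ = (∏ i : Fin n, F i ω) * ENNReal.ofReal (Real.exp D) := by
          rw [Real.exp_sum, ENNReal.ofReal_prod_of_nonneg fun i _ => (Real.exp_pos _).le]
  calc ∫⁻ ω, ENNReal.ofReal (Real.exp (lam ^ α *
        ∑ i : Fin n, (|if M < |ξ i ω| then ξ i ω else 0|
          + ∫ ω', |if M < |ξ i ω'| then ξ i ω' else 0| ∂P) ^ α)) ∂P
      ≤ ∫⁻ ω, (∏ i : Fin n, F i ω) * ENNReal.ofReal (Real.exp D) ∂P := lintegral_mono hptwise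
    _ = (∫⁻ ω, ∏ i : Fin n, F i ω ∂P) * ENNReal.ofReal (Real.exp D) :=
        lintegral_mul_const _ (Finset.measurable_prod _ fun i _ => hFmeas i)
    _ = (∏ i : Fin n, ∫⁻ ω, F i ω ∂P) * ENNReal.ofReal (Real.exp D) := by
        rw [aux_lintegral_prod_indep F hFmeas hFind]
    _ ≤ ENNReal.ofReal (Real.exp 2) * ENNReal.ofReal (Real.exp 6) := by
        apply mul_le_mul' hprod
        exact ENNReal.ofReal_le_ofReal (Real.exp_le_exp.2 hD6)
    _ = ENNReal.ofReal (Real.exp 8) := by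
        rw [← ENNReal.ofReal_mul (Real.exp_pos _).le, ← Real.exp_add]
        norm_num
end

section
/- For every α ∈ (0,1] and all real random variables X, Y defined on the same probability space, ‖X + Y‖_{ψ_α} ≤ ( ‖X‖_{ψ_α}^α + ‖Y‖_{ψ_α}^α )^{1/α}, with the conventions that the right-hand side is +∞ if either norm is infinite. -/
open MeasureTheory Real

/-- The exponential Orlicz norm `‖Y‖_{ψ_α}` (with `inf ∅ = ∞`), as an element of `[0,∞]`. -/
noncomputable def psiNorm {Ω : Type*} [MeasurableSpace Ω] (P : Measure Ω) (α : ℝ)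
    (Y : Ω → ℝ) : ENNReal :=
  sInf {c : ENNReal | ∃ r : ℝ, 0 < r ∧ c = ENNReal.ofReal r ∧
    ∫⁻ ω, ENNReal.ofReal (Real.exp (|Y ω| ^ α / r ^ α)) ∂P ≤ 2}

lemma real_rpow_add_le_add_rpow {a b α : ℝ} (ha : 0 ≤ a) (hb : 0 ≤ b)
    (hα : 0 < α) (hα1 : α ≤ 1) : (a + b) ^ α ≤ a ^ α + b ^ α := by
  have key := NNReal.rpow_add_le_add_rpow a.toNNReal b.toNNReal hα.le hα1
  calc (a + b) ^ α = ((a.toNNReal + b.toNNReal : NNReal) : ℝ) ^ α := by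
        rw [NNReal.coe_add, Real.coe_toNNReal a ha, Real.coe_toNNReal b hb]
    _ = (((a.toNNReal + b.toNNReal) ^ α : NNReal) : ℝ) := (NNReal.coe_rpow _ _).symm
    _ ≤ ((a.toNNReal ^ α + b.toNNReal ^ α : NNReal) : ℝ) := NNReal.coe_le_coe.2 key
    _ = a ^ α + b ^ α := by
        rw [NNReal.coe_add, NNReal.coe_rpow, NNReal.coe_rpow,
          Real.coe_toNNReal a ha, Real.coe_toNNReal b hb]

lemma core_integral {Ω : Type*} [MeasurableSpace Ω] (P : Measure Ω) [IsProbabilityMeasure P]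
    {α r s : ℝ} (hα : 0 < α) (hα1 : α ≤ 1) (hr : 0 < r) (hs : 0 < s)
    (X Y : Ω → ℝ) (hX : Measurable X) (hY : Measurable Y)
    (hIX : ∫⁻ ω, ENNReal.ofReal (Real.exp (|X ω| ^ α / r ^ α)) ∂P ≤ 2)
    (hIY : ∫⁻ ω, ENNReal.ofReal (Real.exp (|Y ω| ^ α / s ^ α)) ∂P ≤ 2) :
    ∫⁻ ω, ENNReal.ofReal (Real.exp (|X ω + Y ω| ^ α / ((r ^ α + s ^ α) ^ (1/α)) ^ α)) ∂P ≤ 2 := by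
  have hrα : (0:ℝ) < r ^ α := rpow_pos_of_pos hr α
  have hsα : (0:ℝ) < s ^ α := rpow_pos_of_pos hs α
  have hT : (0:ℝ) < r ^ α + s ^ α := by linarith
  have hTT : ((r ^ α + s ^ α) ^ (1/α)) ^ α = r ^ α + s ^ α := by
    rw [← Real.rpow_mul hT.le, one_div_mul_cancel hα.ne', Real.rpow_one]
  set l : ℝ := r ^ α / (r ^ α + s ^ α) with hl
  set m : ℝ := s ^ α / (r ^ α + s ^ α) with hm
  have hl0 : 0 ≤ l := by positivity
  have hm0 : 0 ≤ m := by positivity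
  have hlm : l + m = 1 := by rw [hl, hm, ← add_div, div_self hT.ne']
  have key : ∀ ω, Real.exp (|X ω + Y ω| ^ α / ((r ^ α + s ^ α) ^ (1/α)) ^ α)
      ≤ l * Real.exp (|X ω| ^ α / r ^ α) + m * Real.exp (|Y ω| ^ α / s ^ α) := by
    intro ω
    rw [hTT]
    have h1 : |X ω + Y ω| ^ α ≤ |X ω| ^ α + |Y ω| ^ α := by
      calc |X ω + Y ω| ^ α ≤ (|X ω| + |Y ω|) ^ α :=
            Real.rpow_le_rpow (abs_nonneg _) (abs_add_le _ _) hα.le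
        _ ≤ |X ω| ^ α + |Y ω| ^ α :=
            real_rpow_add_le_add_rpow (abs_nonneg _) (abs_nonneg _) hα hα1
    have h2 : (|X ω| ^ α + |Y ω| ^ α) / (r ^ α + s ^ α)
        = l * (|X ω| ^ α / r ^ α) + m * (|Y ω| ^ α / s ^ α) := by
      rw [hl, hm]; field_simp
    calc Real.exp (|X ω + Y ω| ^ α / (r ^ α + s ^ α))
        ≤ Real.exp ((|X ω| ^ α + |Y ω| ^ α) / (r ^ α + s ^ α)) := by
          apply Real.exp_le_exp.2; gcongr
      _ = Real.exp (l * (|X ω| ^ α / r ^ α) + m * (|Y ω| ^ α / s ^ α)) := by rw [h2]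
      _ = Real.exp (|X ω| ^ α / r ^ α) ^ l * Real.exp (|Y ω| ^ α / s ^ α) ^ m := by
          rw [Real.exp_add, mul_comm l _, mul_comm m _, Real.exp_mul, Real.exp_mul]
      _ ≤ l * Real.exp (|X ω| ^ α / r ^ α) + m * Real.exp (|Y ω| ^ α / s ^ α) :=
          Real.geom_mean_le_arith_mean2_weighted hl0 hm0 (Real.exp_pos _).le
            (Real.exp_pos _).le hlm
  have mX : Measurable fun ω => ENNReal.ofReal (Real.exp (|X ω| ^ α / r ^ α)) := by
    fun_prop
  have mY : Measurable fun ω => ENNReal.ofReal (Real.exp (|Y ω| ^ α / s ^ α)) := by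
    fun_prop
  calc ∫⁻ ω, ENNReal.ofReal (Real.exp (|X ω + Y ω| ^ α / ((r ^ α + s ^ α) ^ (1/α)) ^ α)) ∂P
      ≤ ∫⁻ ω, (ENNReal.ofReal l * ENNReal.ofReal (Real.exp (|X ω| ^ α / r ^ α))
          + ENNReal.ofReal m * ENNReal.ofReal (Real.exp (|Y ω| ^ α / s ^ α))) ∂P := by
        apply lintegral_mono
        intro ω
        dsimp only
        rw [← ENNReal.ofReal_mul hl0, ← ENNReal.ofReal_mul hm0,
          ← ENNReal.ofReal_add (by positivity) (by positivity)]
        exact ENNReal.ofReal_le_ofReal (key ω)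
    _ = ENNReal.ofReal l * ∫⁻ ω, ENNReal.ofReal (Real.exp (|X ω| ^ α / r ^ α)) ∂P
        + ENNReal.ofReal m * ∫⁻ ω, ENNReal.ofReal (Real.exp (|Y ω| ^ α / s ^ α)) ∂P := by
        rw [lintegral_add_left (mX.const_mul _), lintegral_const_mul _ mX,
          lintegral_const_mul _ mY]
    _ ≤ ENNReal.ofReal l * 2 + ENNReal.ofReal m * 2 := by gcongr
    _ = 2 := by
        rw [← add_mul, ← ENNReal.ofReal_add hl0 hm0, hlm, ENNReal.ofReal_one, one_mul]

/-- Quasi-triangle inequality for exponential Orlicz norms: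
`‖X + Y‖_{ψ_α} ≤ (‖X‖_{ψ_α}^α + ‖Y‖_{ψ_α}^α)^{1/α}` for `α ∈ (0,1]`,
the inequality being interpreted in `[0,∞]`. -/
theorem stmt_8 {Ω : Type*} [MeasurableSpace Ω] (P : Measure Ω) [IsProbabilityMeasure P]
    (α : ℝ) (hα : 0 < α) (hα1 : α ≤ 1)
    (X Y : Ω → ℝ) (hX : Measurable X) (hY : Measurable Y) :
    psiNorm P α (fun ω => X ω + Y ω)
      ≤ (psiNorm P α X ^ α + psiNorm P α Y ^ α) ^ (1 / α) := by
  by_cases hXtop : psiNorm P α X = ⊤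
  · rw [hXtop, ENNReal.top_rpow_of_pos hα, top_add, ENNReal.top_rpow_of_pos (by positivity)]
    exact le_top
  by_cases hYtop : psiNorm P α Y = ⊤
  · rw [hYtop, ENNReal.top_rpow_of_pos hα, add_top, ENNReal.top_rpow_of_pos (by positivity)]
    exact le_top
  set x := (psiNorm P α X).toReal with hxdef
  set y := (psiNorm P α Y).toReal with hydef
  have hx0 : 0 ≤ x := ENNReal.toReal_nonneg
  have hy0 : 0 ≤ y := ENNReal.toReal_nonneg
  have hX' : psiNorm P α X = ENNReal.ofReal x := (ENNReal.ofReal_toReal hXtop).symm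
  have hY' : psiNorm P α Y = ENNReal.ofReal y := (ENNReal.ofReal_toReal hYtop).symm
  -- main bound for each ε > 0
  have main : ∀ ε : ℝ, 0 < ε → psiNorm P α (fun ω => X ω + Y ω)
      ≤ ENNReal.ofReal (((x + ε) ^ α + (y + ε) ^ α) ^ (1/α)) := by
    intro ε hε
    obtain ⟨c, hc, hclt⟩ : ∃ c ∈ {c : ENNReal | ∃ r : ℝ, 0 < r ∧ c = ENNReal.ofReal r ∧
        ∫⁻ ω, ENNReal.ofReal (Real.exp (|X ω| ^ α / r ^ α)) ∂P ≤ 2},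
        c < ENNReal.ofReal (x + ε) := by
      apply sInf_lt_iff.1
      rw [← psiNorm, hX']
      exact ENNReal.ofReal_lt_ofReal_iff (by linarith) |>.2 (by linarith)
    obtain ⟨d, hd, hdlt⟩ : ∃ d ∈ {c : ENNReal | ∃ s : ℝ, 0 < s ∧ c = ENNReal.ofReal s ∧
        ∫⁻ ω, ENNReal.ofReal (Real.exp (|Y ω| ^ α / s ^ α)) ∂P ≤ 2},
        d < ENNReal.ofReal (y + ε) := by
      apply sInf_lt_iff.1
      rw [← psiNorm, hY']
      exact ENNReal.ofReal_lt_ofReal_iff (by linarith) |>.2 (by linarith)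
    obtain ⟨r, hr, rfl, hIX⟩ := hc
    obtain ⟨s, hs, rfl, hIY⟩ := hd
    have hrx : r ≤ x + ε := by
      by_contra h
      exact absurd (ENNReal.ofReal_le_ofReal (le_of_not_ge h)) (not_le.2 hclt)
    have hsy : s ≤ y + ε := by
      by_contra h
      exact absurd (ENNReal.ofReal_le_ofReal (le_of_not_ge h)) (not_le.2 hdlt)
    have hmem : ENNReal.ofReal ((r ^ α + s ^ α) ^ (1/α)) ∈
        {c : ENNReal | ∃ t : ℝ, 0 < t ∧ c = ENNReal.ofReal t ∧
          ∫⁻ ω, ENNReal.ofReal (Real.exp (|X ω + Y ω| ^ α / t ^ α)) ∂P ≤ 2} := by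
      refine ⟨(r ^ α + s ^ α) ^ (1/α), ?_, rfl, core_integral P hα hα1 hr hs X Y hX hY hIX hIY⟩
      have : (0:ℝ) < r ^ α + s ^ α := by
        have := rpow_pos_of_pos hr α; have := rpow_pos_of_pos hs α; linarith
      exact rpow_pos_of_pos this _
    calc psiNorm P α (fun ω => X ω + Y ω) ≤ ENNReal.ofReal ((r ^ α + s ^ α) ^ (1/α)) :=
          sInf_le hmem
      _ ≤ ENNReal.ofReal (((x + ε) ^ α + (y + ε) ^ α) ^ (1/α)) := by
          apply ENNReal.ofReal_le_ofReal
          apply Real.rpow_le_rpow (by positivity) _ (by positivity)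
          have h1 : r ^ α ≤ (x + ε) ^ α := Real.rpow_le_rpow hr.le hrx hα.le
          have h2 : s ^ α ≤ (y + ε) ^ α := Real.rpow_le_rpow hs.le hsy hα.le
          linarith
  -- take the limit ε → 0⁺
  have hlim : Filter.Tendsto (fun ε : ℝ =>
      ENNReal.ofReal (((x + ε) ^ α + (y + ε) ^ α) ^ (1/α))) (nhdsWithin 0 (Set.Ioi 0))
      (nhds (ENNReal.ofReal ((x ^ α + y ^ α) ^ (1/α)))) := by
    have hcont : Filter.Tendsto (fun ε : ℝ => ((x + ε) ^ α + (y + ε) ^ α) ^ (1/α))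
        (nhdsWithin 0 (Set.Ioi 0)) (nhds ((x ^ α + y ^ α) ^ (1/α))) := by
      apply Filter.Tendsto.mono_left _ nhdsWithin_le_nhds
      have hxc : Filter.Tendsto (fun ε : ℝ => (x + ε) ^ α) (nhds 0) (nhds (x ^ α)) := by
        have : Filter.Tendsto (fun ε : ℝ => x + ε) (nhds 0) (nhds x) := by
          exact (continuous_const.add continuous_id).tendsto' (0:ℝ) _ (by simp [x, y])
        exact (Real.continuousAt_rpow_const x α (Or.inr hα.le)).tendsto.comp
          (by simpa using this)
      have hyc : Filter.Tendsto (fun ε : ℝ => (y + ε) ^ α) (nhds 0) (nhds (y ^ α)) := by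
        have : Filter.Tendsto (fun ε : ℝ => y + ε) (nhds 0) (nhds y) := by
          exact (continuous_const.add continuous_id).tendsto' (0:ℝ) _ (by simp [x, y])
        exact (Real.continuousAt_rpow_const y α (Or.inr hα.le)).tendsto.comp
          (by simpa using this)
      exact ((Real.continuousAt_rpow_const _ (1/α) (Or.inr (by positivity : (0:ℝ) ≤ 1/α))).tendsto.comp
        (hxc.add hyc))
    exact (ENNReal.continuous_ofReal.tendsto _).comp hcont
  have hfinal : psiNorm P α (fun ω => X ω + Y ω)
      ≤ ENNReal.ofReal ((x ^ α + y ^ α) ^ (1/α)) := by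
    refine ge_of_tendsto hlim ?_
    filter_upwards [self_mem_nhdsWithin] with ε hε
    exact main ε hε
  refine hfinal.trans_eq ?_
  rw [hX', hY', ENNReal.ofReal_rpow_of_nonneg hx0 hα.le,
    ENNReal.ofReal_rpow_of_nonneg hy0 hα.le,
    ← ENNReal.ofReal_add (by positivity) (by positivity),
    ENNReal.ofReal_rpow_of_nonneg (by positivity) (by positivity)]
end

section
/- Let p, q > 1 satisfy 1/p + 1/q = 1. Then for all real random variables X, Y defined on the same probability space, ‖XY‖_{ψ_1} ≤ ‖X‖_{ψ_p} · ‖Y‖_{ψ_q}, the inequality being interpreted in [0,∞]. -/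
open MeasureTheory Real

section aux

variable {Ω : Type*} [MeasurableSpace Ω] {P : Measure Ω}

lemma psi_meas {Z : Ω → ℝ} (hZ : Measurable Z) (α c : ℝ) :
    Measurable fun ω => ENNReal.ofReal (Real.exp (|Z ω| ^ α / c ^ α)) :=
  (Real.measurable_exp.comp ((hZ.abs.pow_const α).div_const _)).ennreal_ofReal

/-- Core estimate: the product of admissible constants is admissible. -/
lemma key_bound [IsProbabilityMeasure P] {p q : ℝ} (hpq : p.HolderConjugate q)
    {X Y : Ω → ℝ} (hX : Measurable X) (hY : Measurable Y)
    {r s : ℝ} (hr : 0 < r) (hs : 0 < s)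
    (hXr : ∫⁻ ω, ENNReal.ofReal (Real.exp (|X ω| ^ p / r ^ p)) ∂P ≤ 2)
    (hYs : ∫⁻ ω, ENNReal.ofReal (Real.exp (|Y ω| ^ q / s ^ q)) ∂P ≤ 2) :
    ∫⁻ ω, ENNReal.ofReal (Real.exp (|X ω * Y ω| ^ (1:ℝ) / (r * s) ^ (1:ℝ))) ∂P ≤ 2 := by
  have hp0 : p ≠ 0 := hpq.ne_zero
  have hq0 : q ≠ 0 := hpq.symm.ne_zero
  have hpinv : (0:ℝ) ≤ p⁻¹ := hpq.inv_nonneg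
  have hqinv : (0:ℝ) ≤ q⁻¹ := hpq.symm.inv_nonneg
  set A : Ω → ℝ := fun ω => Real.exp (|X ω| ^ p / r ^ p) with hA
  set B : Ω → ℝ := fun ω => Real.exp (|Y ω| ^ q / s ^ q) with hB
  have claim : ∀ ω, Real.exp (|X ω * Y ω| ^ (1:ℝ) / (r * s) ^ (1:ℝ))
      ≤ p⁻¹ * A ω + q⁻¹ * B ω := by
    intro ω
    have h1 : |X ω * Y ω| ^ (1:ℝ) / (r * s) ^ (1:ℝ) = (|X ω| / r) * (|Y ω| / s) := by
      rw [Real.rpow_one, Real.rpow_one, abs_mul, div_mul_div_comm]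
    have h2 : (|X ω| / r) * (|Y ω| / s)
        ≤ |X ω| ^ p / r ^ p / p + |Y ω| ^ q / s ^ q / q := by
      have := Real.young_inequality_of_nonneg
        (div_nonneg (abs_nonneg (X ω)) hr.le) (div_nonneg (abs_nonneg (Y ω)) hs.le) hpq
      rwa [Real.div_rpow (abs_nonneg _) hr.le, Real.div_rpow (abs_nonneg _) hs.le] at this
    have h3 : Real.exp (|X ω| ^ p / r ^ p / p + |Y ω| ^ q / s ^ q / q)
        ≤ p⁻¹ * A ω + q⁻¹ * B ω := by
      rw [Real.exp_add]
      have h4 := Real.young_inequality_of_nonneg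
        (Real.exp_nonneg (|X ω| ^ p / r ^ p / p)) (Real.exp_nonneg (|Y ω| ^ q / s ^ q / q)) hpq
      rw [← Real.exp_mul, ← Real.exp_mul, div_mul_cancel₀ _ hp0, div_mul_cancel₀ _ hq0] at h4
      calc _ ≤ A ω / p + B ω / q := h4
        _ = p⁻¹ * A ω + q⁻¹ * B ω := by rw [div_eq_inv_mul, div_eq_inv_mul]
    calc Real.exp (|X ω * Y ω| ^ (1:ℝ) / (r * s) ^ (1:ℝ))
        ≤ Real.exp (|X ω| ^ p / r ^ p / p + |Y ω| ^ q / s ^ q / q) := by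
          rw [h1]; exact Real.exp_le_exp.2 h2
      _ ≤ _ := h3
  have hAmeas : Measurable fun ω => ENNReal.ofReal (A ω) := psi_meas hX p r
  have hBmeas : Measurable fun ω => ENNReal.ofReal (B ω) := psi_meas hY q s
  calc ∫⁻ ω, ENNReal.ofReal (Real.exp (|X ω * Y ω| ^ (1:ℝ) / (r * s) ^ (1:ℝ))) ∂P
      ≤ ∫⁻ ω, (ENNReal.ofReal p⁻¹ * ENNReal.ofReal (A ω)
          + ENNReal.ofReal q⁻¹ * ENNReal.ofReal (B ω)) ∂P := by
        refine lintegral_mono fun ω => ?_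
        rw [← ENNReal.ofReal_mul hpinv, ← ENNReal.ofReal_mul hqinv,
          ← ENNReal.ofReal_add (by positivity) (by positivity)]
        exact ENNReal.ofReal_le_ofReal (claim ω)
    _ = ENNReal.ofReal p⁻¹ * ∫⁻ ω, ENNReal.ofReal (A ω) ∂P
        + ENNReal.ofReal q⁻¹ * ∫⁻ ω, ENNReal.ofReal (B ω) ∂P := by
        rw [lintegral_add_left (hAmeas.const_mul _), lintegral_const_mul _ hAmeas,
          lintegral_const_mul _ hBmeas]
    _ ≤ ENNReal.ofReal p⁻¹ * 2 + ENNReal.ofReal q⁻¹ * 2 := by gcongr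
    _ = (ENNReal.ofReal p⁻¹ + ENNReal.ofReal q⁻¹) * 2 := by ring
    _ = 2 := by
        rw [← ENNReal.ofReal_add hpinv hqinv, hpq.inv_add_inv_eq_one, ENNReal.ofReal_one, one_mul]

/-- If the `ψ_q` norm vanishes, the variable vanishes a.e. -/
lemma ae_zero_of_psiNorm_zero [IsProbabilityMeasure P] {q : ℝ} (hq : 0 < q) {Y : Ω → ℝ}
    (hY : Measurable Y) (h : psiNorm P q Y = 0) : ∀ᵐ ω ∂P, Y ω = 0 := by
  have hdelta : ∀ δ : ℝ, 0 < δ → P {ω | δ ≤ |Y ω|} = 0 := by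
    intro δ hδ
    refine le_antisymm (ENNReal.le_of_forall_pos_le_add fun ε hε _ => ?_) (zero_le)
    rw [zero_add]
    have hεr : (0:ℝ) < (ε:ℝ) := hε
    set m : ℝ := max 1 (Real.log (2 / (ε:ℝ))) with hm
    have hm1 : (1:ℝ) ≤ m := le_max_left _ _
    have hm0 : (0:ℝ) < m := lt_of_lt_of_le one_pos hm1
    set t : ℝ := δ / m ^ (q⁻¹) with ht
    have htpos : 0 < t := div_pos hδ (Real.rpow_pos_of_pos hm0 _)
    have hlt : psiNorm P q Y < ENNReal.ofReal t := by
      rw [h]; exact ENNReal.ofReal_pos.2 htpos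
    obtain ⟨c, ⟨s, hs0, rfl, hint⟩, hcs⟩ := sInf_lt_iff.mp hlt
    have hst : s < t := (ENNReal.ofReal_lt_ofReal_iff htpos).1 hcs
    have htq : t ^ q = δ ^ q / m := by
      rw [ht, Real.div_rpow hδ.le (Real.rpow_pos_of_pos hm0 _).le,
        ← Real.rpow_mul hm0.le, inv_mul_cancel₀ hq.ne', Real.rpow_one]
    have hsq : s ^ q < t ^ q := Real.rpow_lt_rpow hs0.le hst hq
    have hsqpos : 0 < s ^ q := Real.rpow_pos_of_pos hs0 _
    have hmain : ∀ ω, δ ≤ |Y ω| → (2 / (ε:ℝ)) ≤ Real.exp (|Y ω| ^ q / s ^ q) := by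
      intro ω hω
      have h1 : δ ^ q ≤ |Y ω| ^ q := Real.rpow_le_rpow hδ.le hω hq.le
      have h2 : δ ^ q / t ^ q < δ ^ q / s ^ q :=
        div_lt_div_of_pos_left (Real.rpow_pos_of_pos hδ _) hsqpos hsq
      have h3 : m ≤ |Y ω| ^ q / s ^ q := by
        have heq : δ ^ q / t ^ q = m := by rw [htq]; field_simp
        calc m = δ ^ q / t ^ q := heq.symm
          _ ≤ δ ^ q / s ^ q := h2.le
          _ ≤ |Y ω| ^ q / s ^ q := by gcongr
      calc 2 / (ε:ℝ) = Real.exp (Real.log (2 / (ε:ℝ))) :=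
            (Real.exp_log (by positivity)).symm
        _ ≤ Real.exp m := Real.exp_le_exp.2 (le_max_right _ _)
        _ ≤ _ := Real.exp_le_exp.2 h3
    have hsub : {ω | δ ≤ |Y ω|} ⊆
        {ω | ENNReal.ofReal (2 / (ε:ℝ)) ≤ ENNReal.ofReal (Real.exp (|Y ω| ^ q / s ^ q))} :=
      fun ω hω => ENNReal.ofReal_le_ofReal (hmain ω hω)
    have hmark : ENNReal.ofReal (2 / (ε:ℝ)) * P {ω | δ ≤ |Y ω|} ≤ 2 := by
      calc ENNReal.ofReal (2 / (ε:ℝ)) * P {ω | δ ≤ |Y ω|}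
          ≤ ENNReal.ofReal (2 / (ε:ℝ)) *
            P {ω | ENNReal.ofReal (2 / (ε:ℝ)) ≤ ENNReal.ofReal (Real.exp (|Y ω| ^ q / s ^ q))} :=
            mul_le_mul_right (measure_mono hsub) _
        _ ≤ ∫⁻ ω, ENNReal.ofReal (Real.exp (|Y ω| ^ q / s ^ q)) ∂P :=
            mul_meas_ge_le_lintegral₀ (psi_meas hY q s).aemeasurable _
        _ ≤ 2 := hint
    have ha0 : ENNReal.ofReal (2 / (ε:ℝ)) ≠ 0 := by
      simp only [ne_eq, ENNReal.ofReal_eq_zero, not_le]; positivity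
    have hatop : ENNReal.ofReal (2 / (ε:ℝ)) ≠ ⊤ := ENNReal.ofReal_ne_top
    have h2eq : (2:ENNReal) = ENNReal.ofReal (2 / (ε:ℝ)) * ENNReal.ofReal (ε:ℝ) := by
      rw [← ENNReal.ofReal_mul (by positivity), div_mul_cancel₀ _ hεr.ne']
      norm_num
    rw [h2eq] at hmark
    have := (ENNReal.mul_le_mul_iff_right ha0 hatop).1 hmark
    rwa [ENNReal.ofReal_coe_nnreal] at this
  rw [Filter.eventually_iff, mem_ae_iff]
  refine measure_mono_null ?_
    (measure_iUnion_null fun n : ℕ => hdelta (1/(n+1)) (by positivity))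
  intro ω hω
  have hpos : 0 < |Y ω| := abs_pos.2 hω
  obtain ⟨n, hn⟩ := exists_nat_one_div_lt hpos
  exact Set.mem_iUnion.2 ⟨n, hn.le⟩

/-- The `ψ_1` norm of an a.e. zero variable is zero. -/
lemma psiNorm_zero_of_ae [IsProbabilityMeasure P] {Z : Ω → ℝ} (hZ : ∀ᵐ ω ∂P, Z ω = 0) :
    psiNorm P 1 Z = 0 := by
  have hmem : ∀ r : ℝ, 0 < r → psiNorm P 1 Z ≤ ENNReal.ofReal r := by
    intro r hr
    refine sInf_le ⟨r, hr, rfl, ?_⟩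
    have : ∫⁻ ω, ENNReal.ofReal (Real.exp (|Z ω| ^ (1:ℝ) / r ^ (1:ℝ))) ∂P = ∫⁻ _, 1 ∂P := by
      refine lintegral_congr_ae (hZ.mono fun ω hω => ?_)
      simp only [hω, abs_zero, Real.rpow_one, zero_div, Real.exp_zero, ENNReal.ofReal_one]
    rw [this, lintegral_one, measure_univ]
    exact one_le_two
  refine le_antisymm (ENNReal.le_of_forall_pos_le_add fun ε hε _ => ?_) (zero_le)
  rw [zero_add]
  have := hmem (ε:ℝ) hε
  rwa [ENNReal.ofReal_coe_nnreal] at this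

end aux

/-- Hölder inequality for exponential Orlicz norms: if `p, q > 1` and `1/p + 1/q = 1`,
then `‖XY‖_{ψ_1} ≤ ‖X‖_{ψ_p} ‖Y‖_{ψ_q}`, interpreted in `[0,∞]`. -/
theorem stmt_10 {Ω : Type*} [MeasurableSpace Ω] (P : Measure Ω) [IsProbabilityMeasure P]
    (p q : ℝ) (hp : 1 < p) (hq : 1 < q) (hpq : 1 / p + 1 / q = 1)
    (X Y : Ω → ℝ) (hX : Measurable X) (hY : Measurable Y) :
    psiNorm P 1 (fun ω => X ω * Y ω) ≤ psiNorm P p X * psiNorm P q Y := by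
  have hconj : p.HolderConjugate q := Real.holderConjugate_iff.mpr ⟨hp, by simpa [one_div] using hpq⟩
  by_cases hX0 : psiNorm P p X = 0
  · have hae := ae_zero_of_psiNorm_zero (lt_trans zero_lt_one hp) hX hX0
    have : ∀ᵐ ω ∂P, X ω * Y ω = 0 := hae.mono fun ω h => by rw [h, zero_mul]
    rw [psiNorm_zero_of_ae this]
    exact zero_le
  by_cases hY0 : psiNorm P q Y = 0
  · have hae := ae_zero_of_psiNorm_zero (lt_trans zero_lt_one hq) hY hY0
    have : ∀ᵐ ω ∂P, X ω * Y ω = 0 := hae.mono fun ω h => by rw [h, mul_zero]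
    rw [psiNorm_zero_of_ae this]
    exact zero_le
  set SX := {c : ENNReal | ∃ r : ℝ, 0 < r ∧ c = ENNReal.ofReal r ∧
    ∫⁻ ω, ENNReal.ofReal (Real.exp (|X ω| ^ p / r ^ p)) ∂P ≤ 2} with hSX
  set SY := {c : ENNReal | ∃ r : ℝ, 0 < r ∧ c = ENNReal.ofReal r ∧
    ∫⁻ ω, ENNReal.ofReal (Real.exp (|Y ω| ^ q / r ^ q)) ∂P ≤ 2} with hSY
  have haX : psiNorm P p X = sInf SX := rfl
  have haY : psiNorm P q Y = sInf SY := rfl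
  by_cases hXne : SX.Nonempty
  swap
  · rw [haX, Set.not_nonempty_iff_eq_empty.1 hXne, _root_.sInf_empty, ENNReal.top_mul hY0]
    exact le_top
  by_cases hYne : SY.Nonempty
  swap
  · rw [haY, Set.not_nonempty_iff_eq_empty.1 hYne, _root_.sInf_empty, ENNReal.mul_top hX0]
    exact le_top
  -- both norms are finite and nonzero
  have hXtop : psiNorm P p X ≠ ⊤ := by
    obtain ⟨c, r, hr, rfl, hint⟩ := hXne
    exact ne_top_of_le_ne_top ENNReal.ofReal_ne_top (sInf_le ⟨r, hr, rfl, hint⟩)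
  have hYtop : psiNorm P q Y ≠ ⊤ := by
    obtain ⟨c, r, hr, rfl, hint⟩ := hYne
    exact ne_top_of_le_ne_top ENNReal.ofReal_ne_top (sInf_le ⟨r, hr, rfl, hint⟩)
  have key : ∀ c ∈ SX, ∀ d ∈ SY, psiNorm P 1 (fun ω => X ω * Y ω) ≤ c * d := by
    rintro c ⟨r, hr, rfl, hintX⟩ d ⟨s, hs, rfl, hintY⟩
    refine sInf_le ⟨r * s, mul_pos hr hs, (ENNReal.ofReal_mul hr.le).symm, ?_⟩
    exact key_bound hconj hX hY hr hs hintX hintY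
  refine ENNReal.le_of_forall_pos_le_add fun ε hε _ => ?_
  lift psiNorm P p X to NNReal using hXtop with a ha
  lift psiNorm P q Y to NNReal using hYtop with b hb
  set δ : NNReal := min 1 (ε / (a + b + 1)) with hδ
  have hδ0 : 0 < δ := lt_min one_pos (by positivity)
  obtain ⟨c, hcX, hc⟩ := sInf_lt_iff.mp
    (show sInf SX < (a : ENNReal) + (δ : ENNReal) by
      rw [← haX]; exact ENNReal.lt_add_right ENNReal.coe_ne_top
        (by exact_mod_cast hδ0.ne'))
  obtain ⟨d, hdY, hd⟩ := sInf_lt_iff.mp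
    (show sInf SY < (b : ENNReal) + (δ : ENNReal) by
      rw [← haY]; exact ENNReal.lt_add_right ENNReal.coe_ne_top
        (by exact_mod_cast hδ0.ne'))
  have hδ1 : (δ:ℝ) ≤ 1 := by exact_mod_cast min_le_left _ _
  have hδε : (δ:ℝ) * ((a:ℝ) + (b:ℝ) + 1) ≤ (ε:ℝ) := by
    have h1 : δ ≤ ε / (a + b + 1) := min_le_right _ _
    have h2 : δ * (a + b + 1) ≤ ε / (a + b + 1) * (a + b + 1) :=
      mul_le_mul_left h1 _
    rw [div_mul_cancel₀ _ (by positivity : a + b + 1 ≠ 0)] at h2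
    exact_mod_cast h2
  calc psiNorm P 1 (fun ω => X ω * Y ω) ≤ c * d := key c hcX d hdY
    _ ≤ ((a : ENNReal) + δ) * ((b : ENNReal) + δ) := mul_le_mul' hc.le hd.le
    _ = (((a + δ) * (b + δ) : NNReal) : ENNReal) := by push_cast; ring
    _ ≤ ((a * b : NNReal) : ENNReal) + (ε : ENNReal) := by
        rw [← ENNReal.coe_add, ENNReal.coe_le_coe, ← NNReal.coe_le_coe]
        push_cast
        have hδnn : (0:ℝ) ≤ (δ:ℝ) := δ.coe_nonneg
        nlinarith [a.coe_nonneg, b.coe_nonneg]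
    _ = (a : ENNReal) * (b : ENNReal) + ε := by rw [ENNReal.coe_mul]
end

section
/- Let X be a nonnegative random variable, let α ∈ (0,1], b > 0 and p ∈ (0,1], and assume that P(X ≥ t) ≤ 2·p^{−1}·exp(−(t/b)^α) for every t ≥ 0. Then E X ≤ 2^{1/α}·e·Γ(1 + 1/α)·(log(e/p))^{1/α}·b, where Γ is the Euler Gamma function Γ(z) = ∫_0^∞ t^{z−1} e^{−t} dt. -/
open MeasureTheory Real Set

lemma integrableOn_exp_neg_mul_rpow_aux {c α : ℝ} (hc : 0 < c) (hα : 0 < α) :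
    IntegrableOn (fun x : ℝ => Real.exp (-(c * x ^ α))) (Set.Ioi 0) := by
  have h1 : IntegrableOn (fun y : ℝ => Real.exp (-y) * y ^ (1 / α - 1)) (Ioi 0) :=
    Real.GammaIntegral_convergent (by positivity : (0 : ℝ) < 1 / α)
  have h2 : IntegrableOn (fun y : ℝ => Real.exp (-(c * y)) * (c * y) ^ (1 / α - 1)) (Ioi 0) := by
    have := (integrableOn_Ioi_comp_mul_left_iff
      (fun y : ℝ => Real.exp (-y) * y ^ (1 / α - 1)) 0 hc).mpr (by simpa using h1)
    simpa using this
  set f0 : ℝ → ℝ := fun y => Real.exp (-(c * y)) * y ^ (1 / α - 1) with hf0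
  have h4 : IntegrableOn f0 (Ioi 0) := by
    have h3 : IntegrableOn
        (fun y : ℝ => c ^ (-(1 / α - 1)) * (Real.exp (-(c * y)) * (c * y) ^ (1 / α - 1)))
        (Ioi 0) := h2.const_mul _
    refine h3.congr_fun (fun y hy => ?_) measurableSet_Ioi
    have hy' : (0 : ℝ) < y := hy
    simp only [hf0]
    rw [Real.mul_rpow hc.le hy'.le]
    rw [Real.rpow_neg hc.le]
    field_simp
  have h5 := (integrableOn_Ioi_comp_rpow_iff' f0 hα.ne').mpr h4
  refine h5.congr_fun (fun x hx => ?_) measurableSet_Ioi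
  have hx' : (0 : ℝ) < x := hx
  have hxα : (0 : ℝ) < x ^ α := Real.rpow_pos_of_pos hx' α
  rw [hf0]
  simp only [smul_eq_mul]
  have h6 : ((x : ℝ) ^ α) ^ (1 / α - 1) = x ^ (1 - α) := by
    rw [← Real.rpow_mul hx'.le]
    congr 1
    field_simp
  rw [h6]
  rw [show x ^ (α - 1) * (Real.exp (-(c * x ^ α)) * x ^ (1 - α))
      = Real.exp (-(c * x ^ α)) * (x ^ (α - 1) * x ^ (1 - α)) by ring,
    ← Real.rpow_add hx']
  norm_num

/-- If `X ≥ 0` a.s. and `P(X ≥ t) ≤ 2 p^{−1} exp(−(t/b)^α)` for all `t ≥ 0`, with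
`α ∈ (0,1]`, `b > 0`, `p ∈ (0,1]`, then
`E X ≤ 2^{1/α} e Γ(1 + 1/α) (log(e/p))^{1/α} b` (the expectation interpreted in `[0,∞]`). -/
theorem stmt_12 {Ω : Type*} [MeasurableSpace Ω] (P : Measure Ω) [IsProbabilityMeasure P]
    (X : Ω → ℝ) (hX : Measurable X) (hpos : ∀ᵐ ω ∂P, 0 ≤ X ω)
    (α b p : ℝ) (hα : 0 < α) (hα1 : α ≤ 1) (hb : 0 < b) (hp : 0 < p) (hp1 : p ≤ 1)
    (htail : ∀ t : ℝ, 0 ≤ t →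
      P {ω | t ≤ X ω} ≤ ENNReal.ofReal (2 * p⁻¹ * Real.exp (-(t / b) ^ α))) :
    ∫⁻ ω, ENNReal.ofReal (X ω) ∂P
      ≤ ENNReal.ofReal ((2 : ℝ) ^ (1 / α) * Real.exp 1 * Real.Gamma (1 + 1 / α) *
          (Real.log (Real.exp 1 / p)) ^ (1 / α) * b) := by
  set L : ℝ := Real.log (Real.exp 1 / p) with hLdef
  have hL1 : 1 ≤ L := by
    rw [hLdef, Real.log_div (Real.exp_ne_zero 1) hp.ne', Real.log_exp]
    have : Real.log p ≤ 0 := Real.log_nonpos hp.le hp1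
    linarith
  have hL0 : 0 < L := lt_of_lt_of_le one_pos hL1
  set b' : ℝ := (2 : ℝ) ^ (1 / α) * L ^ (1 / α) * b with hb'def
  have hb' : 0 < b' := by positivity
  -- key: (b'/b)^α = 2 * L
  have hratio : (b' / b) ^ α = 2 * L := by
    have hdb : b' / b = (2:ℝ) ^ (1/α) * L ^ (1/α) := by
      rw [hb'def]; field_simp
    rw [hdb, Real.mul_rpow (by positivity) (by positivity),
      ← Real.rpow_mul (by norm_num : (0:ℝ) ≤ 2), ← Real.rpow_mul hL0.le,
      one_div_mul_cancel hα.ne', Real.rpow_one, Real.rpow_one]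
  -- uniform tail bound
  have key : ∀ t : ℝ, 0 < t →
      P {ω | t ≤ X ω} ≤ ENNReal.ofReal (Real.exp 1 * Real.exp (-(t / b') ^ α)) := by
    intro t ht
    rcases le_or_gt t b' with hcase | hcase
    · have h1 : (t / b') ^ α ≤ 1 := by
        apply Real.rpow_le_one (by positivity)
        · exact div_le_one_of_le₀ hcase hb'.le
        · exact hα.le
      have h2 : (1 : ℝ) ≤ Real.exp 1 * Real.exp (-(t / b') ^ α) := by
        rw [← Real.exp_add]
        have : (0:ℝ) ≤ 1 + -(t / b') ^ α := by linarith
        calc (1:ℝ) = Real.exp 0 := (Real.exp_zero).symm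
          _ ≤ _ := Real.exp_le_exp.mpr this
      calc P {ω | t ≤ X ω} ≤ 1 := prob_le_one
        _ = ENNReal.ofReal 1 := by simp
        _ ≤ _ := ENNReal.ofReal_le_ofReal h2
    · refine (htail t ht.le).trans (ENNReal.ofReal_le_ofReal ?_)
      set s : ℝ := (t / b') ^ α with hsdef
      have hs1 : 1 < s := by
        rw [hsdef]
        exact Real.one_lt_rpow_iff_of_pos (by positivity) |>.mpr
          (Or.inl ⟨(one_lt_div hb').mpr hcase, hα⟩)
      have htb : (t / b) ^ α = s * (2 * L) := by
        rw [hsdef, ← hratio, ← Real.mul_rpow (by positivity) (by positivity)]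
        congr 1
        field_simp
      have hexp : 2 * p⁻¹ * Real.exp (-(t / b) ^ α)
          = Real.exp (Real.log 2 - Real.log p - (t / b) ^ α) := by
        rw [Real.exp_sub, Real.exp_sub, Real.exp_log (by norm_num : (0:ℝ) < 2),
          Real.exp_log hp, Real.exp_neg]
        field_simp
      rw [hexp]
      have hgoal : Real.log 2 - Real.log p - (t / b) ^ α ≤ 1 + -s := by
        rw [htb]
        have hlogp : Real.log p ≤ 0 := Real.log_nonpos hp.le hp1
        have hlog2 : Real.log 2 < 1 := by
          have := Real.log_two_lt_d9; linarith
        have hLval : L = 1 - Real.log p := by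
          rw [hLdef, Real.log_div (Real.exp_ne_zero 1) hp.ne', Real.log_exp]
        nlinarith [mul_nonneg (by linarith : (0:ℝ) ≤ s - 1) (by linarith : (0:ℝ) ≤ 2 * L - 1),
          hs1, hL1, hlogp, hlog2, hLval]
      calc Real.exp (Real.log 2 - Real.log p - (t / b) ^ α)
          ≤ Real.exp (1 + -s) := Real.exp_le_exp.mpr hgoal
        _ = Real.exp 1 * Real.exp (-s) := Real.exp_add 1 (-s)
  -- layer cake
  rw [lintegral_eq_lintegral_meas_le P hpos hX.aemeasurable]
  -- replace integrand
  have step1 : ∫⁻ t in Ioi (0:ℝ), P {ω | t ≤ X ω}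
      ≤ ∫⁻ t in Ioi (0:ℝ), ENNReal.ofReal (Real.exp 1 * Real.exp (-(t / b') ^ α)) := by
    refine setLIntegral_mono' measurableSet_Ioi (fun t ht => key t ht)
  refine step1.trans ?_
  -- rewrite (t/b')^α = c * t^α with c = (b'^α)⁻¹
  set c : ℝ := (b' ^ α)⁻¹ with hcdef
  have hc : 0 < c := by positivity
  have hrw : ∀ t ∈ Ioi (0:ℝ),
      ENNReal.ofReal (Real.exp 1 * Real.exp (-(t / b') ^ α))
      = ENNReal.ofReal (Real.exp 1 * Real.exp (-(c * t ^ α))) := by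
    intro t ht
    have ht' : (0:ℝ) < t := ht
    congr 2
    rw [hcdef, div_rpow ht'.le hb'.le]
    field_simp
  rw [setLIntegral_congr_fun measurableSet_Ioi hrw]
  have hint : IntegrableOn (fun t : ℝ => Real.exp 1 * Real.exp (-(c * t ^ α))) (Ioi 0) :=
    (integrableOn_exp_neg_mul_rpow_aux hc hα).const_mul _
  rw [← ofReal_integral_eq_lintegral_ofReal hint
      (Filter.Eventually.of_forall (fun t => by positivity))]
  apply ENNReal.ofReal_le_ofReal
  rw [MeasureTheory.integral_const_mul]
  have hval : ∫ t in Ioi (0:ℝ), Real.exp (-(c * t ^ α)) = c ^ (-1/α) * Real.Gamma (1/α + 1) := by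
    have := integral_exp_neg_mul_rpow hα hc
    simpa [neg_mul] using this
  rw [hval]
  have hcval : c ^ (-1/α) = b' := by
    rw [hcdef, ← Real.rpow_neg hb'.le, ← Real.rpow_mul hb'.le,
      show -α * (-1/α) = 1 by field_simp, Real.rpow_one]
  rw [hcval, hb'def, show (1:ℝ)/α + 1 = 1 + 1/α by ring]
  ring_nf
  exact le_refl _
end

section
/- Let T_1, T_2, … be i.i.d. nonnegative random variables with E T_i = 1/θ for some θ > 0 and with ‖T_i‖_{ψ_1} ≤ d for some d > 0 (note that then θd ≥ 1). Then for every ε ∈ (0,1), every positive integer n and every integer k ≥ (1+ε)θn, P( T_1 + … + T_k ≤ n − 1 ) ≤ exp( −ε(k − θn) / (36 θ² d²) ). -/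
open MeasureTheory ProbabilityTheory Real

lemma ptwise_bound (x lam r : ℝ) (hx : 0 ≤ x) (hl : 0 ≤ lam) (hr : 0 < r) :
    Real.exp (-lam * x) ≤ 1 - lam * x + 2 * lam ^ 2 * r ^ 2 * Real.exp (x / r) := by
  have hy0 : 0 ≤ lam * x := mul_nonneg hl hx
  have h1 : ∀ y : ℝ, 0 ≤ y → Real.exp (-y) ≤ 1 - y + y ^ 2 := by
    intro y hy
    have he : Real.exp (-y) * Real.exp y = 1 := by
      rw [← Real.exp_add]; simp
    nlinarith [Real.add_one_le_exp y, Real.exp_pos y, Real.exp_pos (-y)]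
  have h2 : (lam * x) ^ 2 ≤ 2 * lam ^ 2 * r ^ 2 * Real.exp (x / r) := by
    have hz : 0 ≤ x / r := div_nonneg hx hr.le
    have h3 : (x / r) ^ 2 / 2 ≤ Real.exp (x / r) := by
      nlinarith [Real.quadratic_le_exp_of_nonneg hz]
    have h4 : x ^ 2 ≤ 2 * r ^ 2 * Real.exp (x / r) := by
      have : (x / r) ^ 2 = x ^ 2 / r ^ 2 := by ring
      rw [this] at h3
      rw [div_div] at h3
      have := (div_le_iff₀ (by positivity : (0:ℝ) < r ^ 2 * 2)).mp h3
      linarith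
    calc (lam * x) ^ 2 = lam ^ 2 * x ^ 2 := by ring
    _ ≤ lam ^ 2 * (2 * r ^ 2 * Real.exp (x / r)) := by
        exact mul_le_mul_of_nonneg_left h4 (sq_nonneg lam)
    _ = 2 * lam ^ 2 * r ^ 2 * Real.exp (x / r) := by ring
  calc Real.exp (-lam * x) = Real.exp (-(lam * x)) := by ring_nf
  _ ≤ 1 - lam * x + (lam * x) ^ 2 := h1 _ hy0
  _ ≤ 1 - lam * x + 2 * lam ^ 2 * r ^ 2 * Real.exp (x / r) := by linarith

lemma arith_bound (θ d ε r K N a lam : ℝ) (hθ : 0 < θ) (hd : 0 < d) (hr : 0 < r)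
    (hrd : r < 21 / 20 * d) (hε0 : 0 < ε) (hε1 : ε < 1) (hK : 0 < K) (hN : 1 ≤ N)
    (ha : a = K - θ * N) (ha2 : ε * K ≤ (1 + ε) * a)
    (hl : lam = a / (8 * θ * K * r ^ 2)) :
    lam * (N - 1) + K * (-lam / θ + 4 * lam ^ 2 * r ^ 2)
      ≤ -(ε * a / (36 * θ ^ 2 * d ^ 2)) := by
  have hapos : 0 < a := by nlinarith
  have hlpos : 0 < lam := by rw [hl]; positivity
  have step1 : lam * (N - 1) + K * (-lam / θ + 4 * lam ^ 2 * r ^ 2)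
      ≤ -lam * a / θ + 4 * K * lam ^ 2 * r ^ 2 := by
    have h1 : lam * (N - 1) ≤ lam * N := by nlinarith
    have h2 : lam * N + K * (-lam / θ) = -lam * a / θ := by
      rw [ha]; field_simp; ring
    nlinarith [h2]
  have step2 : -lam * a / θ + 4 * K * lam ^ 2 * r ^ 2 = -(a ^ 2 / (16 * θ ^ 2 * K * r ^ 2)) := by
    rw [hl]; field_simp; ring
  have step3 : ε * a / (36 * θ ^ 2 * d ^ 2) ≤ a ^ 2 / (16 * θ ^ 2 * K * r ^ 2) := by
    rw [div_le_div_iff₀ (by positivity) (by positivity)]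
    have hek : ε * K ≤ 2 * a := by nlinarith
    have hr2 : r ^ 2 ≤ 441 / 400 * d ^ 2 := by nlinarith
    have h6 : (ε * K) * r ^ 2 ≤ (2 * a) * (441 / 400 * d ^ 2) :=
      mul_le_mul hek hr2 (sq_nonneg r) (by positivity)
    nlinarith [mul_le_mul_of_nonneg_left h6 (by positivity : (0:ℝ) ≤ 16 * θ ^ 2 * a),
      mul_nonneg (mul_nonneg (sq_nonneg θ) (sq_nonneg a)) (sq_nonneg d)]
  linarith [step1, step2.le, step2.ge, step3]

/-- If `T_1, T_2, …` are i.i.d. nonnegative with `E T_i = 1/θ` and `‖T_i‖_{ψ_1} ≤ d`,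
then for `ε ∈ (0,1)`, `n ≥ 1` and an integer `k ≥ (1+ε)θn`,
`P(T_1 + … + T_k ≤ n − 1) ≤ exp(−ε(k − θn)/(36 θ² d²))`. -/
theorem stmt_13 {Ω : Type*} [MeasurableSpace Ω] (P : Measure Ω) [IsProbabilityMeasure P]
    (T : ℕ → Ω → ℝ) (hmeas : ∀ i, Measurable (T i))
    (hindep : iIndepFun T P)
    (hident : ∀ i j, IdentDistrib (T i) (T j) P P)
    (hpos : ∀ i, ∀ᵐ ω ∂P, 0 ≤ T i ω)
    (θ d : ℝ) (hθ : 0 < θ) (hd : 0 < d)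
    (hmean : ∀ i, ∫ ω, T i ω ∂P = 1 / θ)
    (hψ : ∀ i, psiNorm P 1 (T i) ≤ ENNReal.ofReal d)
    (ε : ℝ) (hε : ε ∈ Set.Ioo (0 : ℝ) 1) (n : ℕ) (hn : 0 < n)
    (k : ℕ) (hk : (1 + ε) * θ * n ≤ (k : ℝ)) :
    P {ω | ∑ i ∈ Finset.range k, T i ω ≤ (n : ℝ) - 1}
      ≤ ENNReal.ofReal (Real.exp (-(ε * ((k : ℝ) - θ * n) / (36 * θ ^ 2 * d ^ 2)))) := by
  obtain ⟨hε0, hε1⟩ := hε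
  have hN1 : (1 : ℝ) ≤ (n : ℝ) := by exact_mod_cast hn
  have hKpos : (0 : ℝ) < (k : ℝ) := lt_of_lt_of_le (by positivity) hk
  have hk0 : 0 < k := by exact_mod_cast hKpos
  -- extract r from the psi-norm bound
  have hdd : ENNReal.ofReal d < ENNReal.ofReal (21 / 20 * d) := by
    rw [ENNReal.ofReal_lt_ofReal_iff (by positivity)]; linarith
  have hlt : psiNorm P 1 (T 0) < ENNReal.ofReal (21 / 20 * d) := lt_of_le_of_lt (hψ 0) hdd
  rw [psiNorm, sInf_lt_iff] at hlt
  obtain ⟨c, ⟨r, hr0, rfl, hintr⟩, hclt⟩ := hlt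
  have hrd : r < 21 / 20 * d := by
    rwa [ENNReal.ofReal_lt_ofReal_iff (by positivity)] at hclt
  simp only [Real.rpow_one] at hintr
  -- the same lintegral bound holds for every i by identical distribution
  have hintr' : ∀ i, ∫⁻ ω, ENNReal.ofReal (Real.exp (|T i ω| / r)) ∂P ≤ 2 := by
    intro i
    have hm : Measurable (fun x : ℝ => ENNReal.ofReal (Real.exp (|x| / r))) :=
      (Real.measurable_exp.comp (measurable_abs.div_const r)).ennreal_ofReal
    have heq : ∫⁻ ω, ENNReal.ofReal (Real.exp (|T i ω| / r)) ∂P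
        = ∫⁻ ω, ENNReal.ofReal (Real.exp (|T 0 ω| / r)) ∂P := by
      have := ((hident i 0).comp hm).lintegral_eq
      simpa [Function.comp] using this
    rw [heq]; exact hintr
  -- integrability of exp(|T i|/r) and its integral bound
  have hgmeas : ∀ i, Measurable (fun ω => Real.exp (|T i ω| / r)) := fun i =>
    (((hmeas i).abs.div_const r).exp)
  have hgint : ∀ i, Integrable (fun ω => Real.exp (|T i ω| / r)) P := by
    intro i
    refine ⟨(hgmeas i).aestronglyMeasurable, ?_⟩
    rw [hasFiniteIntegral_iff_ofReal (ae_of_all _ fun ω => (Real.exp_pos _).le)]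
    exact lt_of_le_of_lt (hintr' i) (by norm_num)
  have hgint2 : ∀ i, ∫ ω, Real.exp (|T i ω| / r) ∂P ≤ 2 := by
    intro i
    rw [integral_eq_lintegral_of_nonneg_ae (ae_of_all _ fun ω => (Real.exp_pos _).le)
      (hgmeas i).aestronglyMeasurable]
    have := ENNReal.toReal_mono (by norm_num) (hintr' i)
    simpa using this
  -- integrability of T i
  have hTint : ∀ i, Integrable (T i) P := by
    intro i
    refine Integrable.mono' ((hgint i).const_mul r) (hmeas i).aestronglyMeasurable
      (ae_of_all _ fun ω => ?_)
    have h1 : |T i ω| / r ≤ Real.exp (|T i ω| / r) := by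
      linarith [Real.add_one_le_exp (|T i ω| / r)]
    rw [Real.norm_eq_abs]
    calc |T i ω| = r * (|T i ω| / r) := by field_simp
    _ ≤ r * Real.exp (|T i ω| / r) := mul_le_mul_of_nonneg_left h1 hr0.le
  -- set up the exponent
  obtain ⟨a, hadef⟩ : ∃ x : ℝ, x = (k : ℝ) - θ * n := ⟨_, rfl⟩
  have ha2 : ε * k ≤ (1 + ε) * a := by
    have h : (1 + ε) * (θ * n) ≤ (k : ℝ) := by nlinarith
    nlinarith [hadef]
  have hapos : 0 < a := by nlinarith [hadef]
  obtain ⟨lam, hlam⟩ : ∃ x : ℝ, x = a / (8 * θ * (k : ℝ) * r ^ 2) := ⟨_, rfl⟩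
  have hlpos : 0 < lam := by rw [hlam]; positivity
  -- exp(-lam * T i) is integrable
  have hexpint : ∀ i, Integrable (fun ω => Real.exp (-lam * T i ω)) P := by
    intro i
    refine Integrable.mono' (integrable_const 1)
      ((hmeas i).const_mul (-lam)).exp.aestronglyMeasurable ?_
    filter_upwards [hpos i] with ω hω
    rw [Real.norm_eq_abs, abs_of_pos (Real.exp_pos _), ← Real.exp_zero]
    exact Real.exp_le_exp.2 (by nlinarith)
  -- mgf bound for each i
  obtain ⟨c, hc⟩ : ∃ x : ℝ, x = -lam / θ + 4 * lam ^ 2 * r ^ 2 := ⟨_, rfl⟩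
  have hmgf : ∀ i, mgf (T i) P (-lam) ≤ Real.exp c := by
    intro i
    have hint_a : Integrable (fun ω => 1 - lam * T i ω) P := by
      exact (integrable_const 1).sub ((hTint i).const_mul lam)
    have hint_b : Integrable (fun ω => 2 * lam ^ 2 * r ^ 2 * Real.exp (|T i ω| / r)) P :=
      (hgint i).const_mul _
    have h1 : mgf (T i) P (-lam)
        ≤ ∫ ω, ((1 - lam * T i ω) + 2 * lam ^ 2 * r ^ 2 * Real.exp (|T i ω| / r)) ∂P := by
      refine integral_mono_ae (hexpint i) (hint_a.add hint_b) ?_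
      filter_upwards [hpos i] with ω hω
      have := ptwise_bound (T i ω) lam r hω hlpos.le hr0
      rw [abs_of_nonneg hω]
      linarith
    rw [integral_add hint_a hint_b,
      integral_sub (integrable_const 1) ((hTint i).const_mul lam), integral_const,
      integral_const_mul, integral_const_mul, hmean i] at h1
    simp only [measure_univ, ENNReal.toReal_one, smul_eq_mul, one_mul, probReal_univ, mul_one] at h1
    have h3 : 2 * lam ^ 2 * r ^ 2 * (∫ ω, Real.exp (|T i ω| / r) ∂P)
        ≤ 2 * lam ^ 2 * r ^ 2 * 2 :=
      mul_le_mul_of_nonneg_left (hgint2 i) (by positivity)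
    have h4 : 1 - lam * (1 / θ) = 1 + -lam / θ := by ring
    rw [h4] at h1
    have h5 : mgf (T i) P (-lam) ≤ 1 + c := by rw [hc]; linarith
    exact h5.trans (by linarith [Real.add_one_le_exp c])
  -- Chernoff bound
  have hsum_eq : (∑ i ∈ Finset.range k, T i) = (fun ω => ∑ i ∈ Finset.range k, T i ω) := by
    funext ω; simp [Finset.sum_apply]
  have hmeasS : Measurable (fun ω => ∑ i ∈ Finset.range k, T i ω) :=
    Finset.measurable_sum _ fun i _ => hmeas i
  have hSint : Integrable (fun ω => Real.exp (-lam * ∑ i ∈ Finset.range k, T i ω)) P := by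
    refine Integrable.mono' (integrable_const 1)
      ((hmeasS.const_mul (-lam)).exp).aestronglyMeasurable ?_
    have hposall : ∀ᵐ ω ∂P, ∀ i, 0 ≤ T i ω := ae_all_iff.2 hpos
    filter_upwards [hposall] with ω hω
    rw [Real.norm_eq_abs, abs_of_pos (Real.exp_pos _), ← Real.exp_zero]
    refine Real.exp_le_exp.2 ?_
    have hsum : 0 ≤ ∑ i ∈ Finset.range k, T i ω :=
      Finset.sum_nonneg fun i _ => hω i
    nlinarith
  have hch := measure_le_le_exp_mul_mgf (μ := P) (X := fun ω => ∑ i ∈ Finset.range k, T i ω)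
    ((n : ℝ) - 1) (neg_nonpos.2 hlpos.le) hSint
  have hmgfsum : mgf (fun ω => ∑ i ∈ Finset.range k, T i ω) P (-lam)
      = ∏ i ∈ Finset.range k, mgf (T i) P (-lam) := by
    rw [← hsum_eq]
    exact hindep.mgf_sum hmeas (Finset.range k)
  rw [hmgfsum] at hch
  have hprod : ∏ i ∈ Finset.range k, mgf (T i) P (-lam) ≤ Real.exp c ^ k := by
    have h := Finset.prod_le_prod (s := Finset.range k)
      (fun i (_ : i ∈ Finset.range k) => mgf_nonneg (X := T i) (μ := P) (t := -lam))
      (fun i _ => hmgf i)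
    simpa [Finset.prod_const, Finset.card_range] using h
  have hfinal : (P {ω | ∑ i ∈ Finset.range k, T i ω ≤ (n : ℝ) - 1}).toReal
      ≤ Real.exp (lam * ((n : ℝ) - 1) + (k : ℝ) * c) := by
    calc (P {ω | ∑ i ∈ Finset.range k, T i ω ≤ (n : ℝ) - 1}).toReal
        ≤ Real.exp (-(-lam) * ((n : ℝ) - 1)) * ∏ i ∈ Finset.range k, mgf (T i) P (-lam) := hch
    _ ≤ Real.exp (lam * ((n : ℝ) - 1)) * Real.exp c ^ k := by
        rw [neg_neg]
        exact mul_le_mul_of_nonneg_left hprod (Real.exp_pos _).le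
    _ = Real.exp (lam * ((n : ℝ) - 1) + (k : ℝ) * c) := by
        rw [← Real.exp_nat_mul, ← Real.exp_add]
  have harith : lam * ((n : ℝ) - 1) + (k : ℝ) * c
      ≤ -(ε * ((k : ℝ) - θ * n) / (36 * θ ^ 2 * d ^ 2)) := by
    rw [← hadef]
    calc lam * ((n : ℝ) - 1) + (k : ℝ) * c
        = lam * ((n : ℝ) - 1) + (k : ℝ) * (-lam / θ + 4 * lam ^ 2 * r ^ 2) := by rw [hc]
    _ ≤ -(ε * a / (36 * θ ^ 2 * d ^ 2)) :=
        arith_bound θ d ε r (k : ℝ) (n : ℝ) a lam hθ hd hr0 hrd hε0 hε1 hKpos hN1 hadef ha2 hlam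
  calc P {ω | ∑ i ∈ Finset.range k, T i ω ≤ (n : ℝ) - 1}
      = ENNReal.ofReal (P {ω | ∑ i ∈ Finset.range k, T i ω ≤ (n : ℝ) - 1}).toReal :=
        (ENNReal.ofReal_toReal (measure_ne_top P _)).symm
  _ ≤ ENNReal.ofReal (Real.exp (-(ε * ((k : ℝ) - θ * n) / (36 * θ ^ 2 * d ^ 2)))) :=
      ENNReal.ofReal_le_ofReal (hfinal.trans (Real.exp_le_exp.2 harith))
end

section
/- Let F be a countable set and let ξ_0, …, ξ_{n−1} be i.i.d. random elements, each ξ_i = (ξ_i(f))_{f∈F} being a real-valued stochastic process indexed by F, such that E|ξ_0(f)| < ∞ for every f ∈ F and E sup_{f∈F} |Σ_{i=0}^{n−1} ξ_i(f)| < ∞. Then for every integer m with 1 ≤ m ≤ n, E sup_{f∈F} |Σ_{i=0}^{n−1} ξ_i(f)| ≤ (n/m) · E sup_{f∈F} |Σ_{i=0}^{m−1} ξ_i(f)|. -/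
open MeasureTheory ProbabilityTheory Real

theorem sum_shift_mod' {M : Type*} [AddCommMonoid M] (f : ℕ → M) (n t : ℕ) (ht : t ≤ n) :
    ∑ k ∈ Finset.range n, f ((k + t) % n) = ∑ k ∈ Finset.range n, f k := by
  rcases Nat.eq_zero_or_pos n with h0 | h0
  · subst h0; simp
  have h1 : ∑ k ∈ Finset.Ico 0 (n - t), f ((k + t) % n) = ∑ j ∈ Finset.Ico t n, f j := by
    rw [Finset.sum_Ico_eq_sum_range, Finset.sum_Ico_eq_sum_range]
    refine Finset.sum_congr (by simp) fun k hk => ?_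
    rw [Finset.mem_range] at hk
    have : (0 + k + t) < n := by omega
    rw [Nat.mod_eq_of_lt this]
    congr 1; omega
  have h2 : ∑ k ∈ Finset.Ico (n - t) n, f ((k + t) % n) = ∑ j ∈ Finset.Ico 0 t, f j := by
    rw [Finset.sum_Ico_eq_sum_range, Finset.sum_Ico_eq_sum_range]
    refine Finset.sum_congr (by rw [Nat.sub_sub_self ht, Nat.sub_zero]) fun k hk => ?_
    rw [Finset.mem_range] at hk
    have hlt : (n - t + k + t) - n < n := by omega
    have hge : n ≤ n - t + k + t := by omega
    have : (n - t + k + t) % n = (n - t + k + t) - n := by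
      rw [Nat.mod_eq_sub_mod hge, Nat.mod_eq_of_lt hlt]
    rw [this]
    congr 1; omega
  calc ∑ k ∈ Finset.range n, f ((k + t) % n)
      = ∑ k ∈ Finset.Ico 0 (n-t), f ((k + t) % n) + ∑ k ∈ Finset.Ico (n-t) n, f ((k + t) % n) := by
        rw [Finset.sum_Ico_consecutive _ (Nat.zero_le _) (Nat.sub_le n t), Finset.range_eq_Ico]
    _ = ∑ j ∈ Finset.Ico t n, f j + ∑ j ∈ Finset.Ico 0 t, f j := by rw [h1, h2]
    _ = ∑ k ∈ Finset.range n, f k := by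
        rw [add_comm, Finset.sum_Ico_consecutive _ (Nat.zero_le _) ht, Finset.range_eq_Ico]

theorem map_tuple_eq_pi' {Ω β : Type*} [MeasurableSpace Ω] [MeasurableSpace β]
    (P : Measure Ω) [IsProbabilityMeasure P] {n m : ℕ}
    (f : Fin n → Ω → β) (hf : ∀ i, Measurable (f i))
    (hindep : iIndepFun f P)
    (e : Fin m → Fin n) (he : Function.Injective e) :
    P.map (fun ω (i : Fin m) => f (e i) ω) = Measure.pi (fun i => P.map (f (e i))) := by
  haveI : ∀ i : Fin m, IsProbabilityMeasure (P.map (f (e i))) :=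
    fun i => Measure.isProbabilityMeasure_map (hf _).aemeasurable
  refine (Measure.pi_eq fun s hs => ?_).symm
  have hΦ : Measurable (fun ω (i : Fin m) => f (e i) ω) :=
    measurable_pi_lambda _ fun i => hf _
  rw [Measure.map_apply hΦ (MeasurableSet.univ_pi hs)]
  have hpre : (fun ω (i : Fin m) => f (e i) ω) ⁻¹' (Set.univ.pi s)
      = ⋂ i : Fin m, f (e i) ⁻¹' s i := by
    ext ω; simp [Set.mem_pi]
  rw [hpre]
  classical
  -- extend the sets along e
  set sets : Fin n → Set β := fun a => ⋂ (i : Fin m) (_ : e i = a), s i with hsets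
  have hsets_meas : ∀ a, MeasurableSet (sets a) := fun a =>
    MeasurableSet.iInter fun i => MeasurableSet.iInter fun _ => hs i
  have hsets_e : ∀ i : Fin m, sets (e i) = s i := by
    intro i
    apply le_antisymm
    · intro x hx
      simp only [hsets, Set.mem_iInter] at hx
      exact hx i rfl
    · refine Set.subset_iInter fun i' => Set.subset_iInter fun h => ?_
      cases he h; exact le_rfl
  have key := hindep.measure_inter_preimage_eq_mul (Finset.univ.image e)
    (sets := sets) (fun a _ => hsets_meas a)
  have h1 : (⋂ a ∈ Finset.univ.image e, f a ⁻¹' sets a) = ⋂ i : Fin m, f (e i) ⁻¹' s i := by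
    ext ω
    simp only [Set.mem_iInter, Finset.mem_image, Finset.mem_univ, true_and]
    constructor
    · intro h i
      have := h (e i) ⟨i, rfl⟩
      rwa [hsets_e] at this
    · rintro h a ⟨i, rfl⟩
      rw [hsets_e]; exact h i
  have h2 : ∏ a ∈ Finset.univ.image e, P (f a ⁻¹' sets a)
      = ∏ i : Fin m, P.map (f (e i)) (s i) := by
    rw [Finset.prod_image (fun i _ j _ h => he h)]
    exact Finset.prod_congr rfl fun i _ => by
      rw [hsets_e, Measure.map_apply (hf _) (hs i)]
  rw [h1] at key
  rw [key, h2]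

/-- Exchangeability bound. -/
theorem stmt_14 {Ω : Type*} [MeasurableSpace Ω] (P : Measure Ω) [IsProbabilityMeasure P]
    {ι : Type*} [Countable ι]
    (n : ℕ) (hn : 0 < n)
    (ξ : ℕ → Ω → ι → ℝ) (hmeas : ∀ i, i < n → Measurable (ξ i))
    (hindep : iIndepFun (fun i : Fin n => ξ i) P)
    (hident : ∀ i j, i < n → j < n → IdentDistrib (ξ i) (ξ j) P P)
    (hint : ∀ j : ι, Integrable (fun ω => ξ 0 ω j) P)
    (hsupint : ∫⁻ ω, (⨆ j : ι, ENNReal.ofReal |∑ i ∈ Finset.range n, ξ i ω j|) ∂P ≠ ⊤)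
    (m : ℕ) (hm1 : 1 ≤ m) (hmn : m ≤ n) :
    ∫⁻ ω, (⨆ j : ι, ENNReal.ofReal |∑ i ∈ Finset.range n, ξ i ω j|) ∂P
      ≤ ENNReal.ofReal ((n : ℝ) / m) *
          ∫⁻ ω, (⨆ j : ι, ENNReal.ofReal |∑ i ∈ Finset.range m, ξ i ω j|) ∂P := by
  have hm0 : (0:ℝ) < m := by exact_mod_cast hm1
  have hmodlt : ∀ k i : ℕ, (k + i) % n < n := fun k i => Nat.mod_lt _ hn
  set I : ℕ → Ω → ENNReal :=
    fun k ω => ⨆ j : ι, ENNReal.ofReal |∑ i ∈ Finset.range m, ξ ((k + i) % n) ω j| with hI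
  have hImeas : ∀ k, Measurable (I k) := by
    intro k
    refine Measurable.iSup fun j => Measurable.ennreal_ofReal ?_
    exact (Finset.measurable_sum _ fun i _ =>
      (measurable_pi_apply j).comp (hmeas _ (hmodlt k i))).abs
  -- each window integral equals the integral for the first m
  have key : ∀ k, ∫⁻ ω, I k ω ∂P
      = ∫⁻ ω, (⨆ j : ι, ENNReal.ofReal |∑ i ∈ Finset.range m, ξ i ω j|) ∂P := by
    intro k
    set g : (Fin m → ι → ℝ) → ENNReal :=
      fun x => ⨆ j : ι, ENNReal.ofReal |∑ i : Fin m, x i j| with hgdef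
    have hg : Measurable g := by
      refine Measurable.iSup fun j => Measurable.ennreal_ofReal ?_
      exact (Finset.measurable_sum _ fun i _ =>
        (measurable_pi_apply j).comp (measurable_pi_apply i)).abs
    set f : Fin n → Ω → ι → ℝ := fun a => ξ a.val with hfdef
    have hf : ∀ a, Measurable (f a) := fun a => hmeas a.val a.2
    set e : Fin m → Fin n := fun i => ⟨(k + i.val) % n, hmodlt k i.val⟩ with hedef
    have he : Function.Injective e := by
      intro i i' h
      have h' : (k + i.val) % n = (k + i'.val) % n := congrArg Fin.val h
      have h2 : i.val % n = i'.val % n := Nat.ModEq.add_left_cancel' k h'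
      have := (Nat.mod_eq_of_lt (lt_of_lt_of_le i.2 hmn)) ▸
        (Nat.mod_eq_of_lt (lt_of_lt_of_le i'.2 hmn)) ▸ h2
      exact Fin.ext this
    set e0 : Fin m → Fin n := Fin.castLE hmn with he0def
    have he0 : Function.Injective e0 := Fin.castLE_injective hmn
    have hmapk := map_tuple_eq_pi' P f hf hindep e he
    have hmap0 := map_tuple_eq_pi' P f hf hindep e0 he0
    have hpi_eq : (fun i : Fin m => P.map (f (e i))) = fun i : Fin m => P.map (f (e0 i)) := by
      funext i
      exact (hident _ _ (hmodlt k i.val) (lt_of_lt_of_le i.2 hmn)).map_eq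
    have hΦk : Measurable (fun ω (i : Fin m) => f (e i) ω) :=
      measurable_pi_lambda _ fun i => hf _
    have hΦ0 : Measurable (fun ω (i : Fin m) => f (e0 i) ω) :=
      measurable_pi_lambda _ fun i => hf _
    have hmaps : P.map (fun ω (i : Fin m) => f (e i) ω)
        = P.map (fun ω (i : Fin m) => f (e0 i) ω) := by
      rw [hmapk, hmap0, hpi_eq]
    have h1 : ∫⁻ ω, g (fun i : Fin m => f (e i) ω) ∂P
        = ∫⁻ ω, g (fun i : Fin m => f (e0 i) ω) ∂P := by
      rw [← lintegral_map hg hΦk, ← lintegral_map hg hΦ0, hmaps]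
    have h2 : ∀ ω, g (fun i : Fin m => f (e i) ω) = I k ω := by
      intro ω
      simp only [hgdef, hI, hfdef, hedef]
      congr 1; funext j; congr 1; congr 1
      rw [Finset.sum_range]
    have h3 : ∀ ω, g (fun i : Fin m => f (e0 i) ω)
        = ⨆ j : ι, ENNReal.ofReal |∑ i ∈ Finset.range m, ξ i ω j| := by
      intro ω
      simp only [hgdef, hfdef, he0def]
      congr 1; funext j; congr 1; congr 1
      rw [Finset.sum_range]
      rfl
    calc ∫⁻ ω, I k ω ∂P = ∫⁻ ω, g (fun i : Fin m => f (e i) ω) ∂P := by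
          exact lintegral_congr fun ω => (h2 ω).symm
      _ = ∫⁻ ω, g (fun i : Fin m => f (e0 i) ω) ∂P := h1
      _ = _ := lintegral_congr fun ω => h3 ω
  -- pointwise bound
  have hpt : ∀ ω, (⨆ j : ι, ENNReal.ofReal |∑ i ∈ Finset.range n, ξ i ω j|)
      ≤ (m : ENNReal)⁻¹ * ∑ k ∈ Finset.range n, I k ω := by
    intro ω
    refine iSup_le fun j => ?_
    have hsum : ∑ k ∈ Finset.range n, ∑ i ∈ Finset.range m, ξ ((k + i) % n) ω j
        = (m : ℝ) * ∑ i ∈ Finset.range n, ξ i ω j := by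
      rw [Finset.sum_comm]
      rw [Finset.sum_congr rfl fun t ht => sum_shift_mod' (fun a => ξ a ω j) n t
        (le_trans (le_of_lt (Finset.mem_range.1 ht)) hmn)]
      simp [Finset.sum_const, nsmul_eq_mul]
    have habs : |∑ i ∈ Finset.range n, ξ i ω j|
        ≤ (m : ℝ)⁻¹ * ∑ k ∈ Finset.range n, |∑ i ∈ Finset.range m, ξ ((k + i) % n) ω j| := by
      have h4 : |∑ i ∈ Finset.range n, ξ i ω j|
          = (m : ℝ)⁻¹ * |∑ k ∈ Finset.range n, ∑ i ∈ Finset.range m, ξ ((k + i) % n) ω j| := by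
        rw [hsum, abs_mul, abs_of_nonneg (le_of_lt hm0)]
        field_simp
      rw [h4]
      exact mul_le_mul_of_nonneg_left (Finset.abs_sum_le_sum_abs _ _) (by positivity)
    calc ENNReal.ofReal |∑ i ∈ Finset.range n, ξ i ω j|
        ≤ ENNReal.ofReal ((m : ℝ)⁻¹ *
            ∑ k ∈ Finset.range n, |∑ i ∈ Finset.range m, ξ ((k + i) % n) ω j|) :=
          ENNReal.ofReal_le_ofReal habs
      _ = (m : ENNReal)⁻¹ * ∑ k ∈ Finset.range n,
            ENNReal.ofReal |∑ i ∈ Finset.range m, ξ ((k + i) % n) ω j| := by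
          rw [ENNReal.ofReal_mul (by positivity),
            ENNReal.ofReal_sum_of_nonneg (fun k _ => abs_nonneg _),
            ENNReal.ofReal_inv_of_pos hm0, ENNReal.ofReal_natCast]
      _ ≤ (m : ENNReal)⁻¹ * ∑ k ∈ Finset.range n, I k ω := by
          gcongr with k hk
          exact le_iSup (fun j' => ENNReal.ofReal
            |∑ i ∈ Finset.range m, ξ ((k + i) % n) ω j'|) j
  calc ∫⁻ ω, (⨆ j : ι, ENNReal.ofReal |∑ i ∈ Finset.range n, ξ i ω j|) ∂P
      ≤ ∫⁻ ω, (m : ENNReal)⁻¹ * ∑ k ∈ Finset.range n, I k ω ∂P := lintegral_mono hpt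
    _ = (m : ENNReal)⁻¹ * ∑ k ∈ Finset.range n, ∫⁻ ω, I k ω ∂P := by
        rw [lintegral_const_mul' _ _ (by simp; omega),
          lintegral_finset_sum _ (fun k _ => hImeas k)]
    _ = (m : ENNReal)⁻¹ * ((n : ENNReal) *
          ∫⁻ ω, (⨆ j : ι, ENNReal.ofReal |∑ i ∈ Finset.range m, ξ i ω j|) ∂P) := by
        rw [Finset.sum_congr rfl fun k _ => key k, Finset.sum_const, Finset.card_range,
          nsmul_eq_mul]
    _ = ENNReal.ofReal ((n : ℝ) / m) *
          ∫⁻ ω, (⨆ j : ι, ENNReal.ofReal |∑ i ∈ Finset.range m, ξ i ω j|) ∂P := by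
        rw [ENNReal.ofReal_div_of_pos hm0, ENNReal.ofReal_natCast, ENNReal.ofReal_natCast,
          ENNReal.div_eq_inv_mul]
        ring
end

section
/- Let g : 𝒳 → [0,∞) be measurable, let σ_C = inf{k ≥ 0 : X_{km} ∈ C} and define G_C(x, g) = E_x exp( Σ_{k=0}^{σ_C} g(X_{km}) ). Assume that d := sup_{x∈C} E_x exp( Σ_{k=0}^{τ_C−1} g(X_{km}) ) < ∞ and that G_C(x, g) < ∞ for every x ∈ 𝒳. Then the function V(x) = log G_C(x, g) satisfies, for every x ∈ 𝒳, ∫ exp(V(y)) P^m(x, dy) ≤ exp( V(x) − g(x) + 2 log d · 1_C(x) ), where P^m is the m-step transition kernel, and moreover V(x) ≤ log d for every x ∈ C. -/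
open MeasureTheory ProbabilityTheory Real
open scoped ENNReal

/-- Prepend a point to a trajectory. -/
def prependPath {𝒳 : Type*} (x : 𝒳) (ω : ℕ → 𝒳) : ℕ → 𝒳 :=
  fun n => Nat.casesOn n x fun k => ω k

/-- The first return time `τ_C = inf{k ≥ 1 : X_{km} ∈ C}` of the `m`-skeleton to `C`,
with values in `[0,∞]` (`inf ∅ = ∞`). -/
noncomputable def pathTau {𝒳 : Type*} (m : ℕ) (C : Set 𝒳) (ω : ℕ → 𝒳) : ℝ≥0∞ :=
  sInf {c : ℝ≥0∞ | ∃ j : ℕ, c = j ∧ 1 ≤ j ∧ ω (j * m) ∈ C}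

/-- The first hitting time `σ_C = inf{k ≥ 0 : X_{km} ∈ C}` of the `m`-skeleton,
with values in `[0,∞]` (`inf ∅ = ∞`). -/
noncomputable def pathSigma {𝒳 : Type*} (m : ℕ) (C : Set 𝒳) (ω : ℕ → 𝒳) : ℝ≥0∞ :=
  sInf {c : ℝ≥0∞ | ∃ j : ℕ, c = j ∧ ω (j * m) ∈ C}

/-- The exponential function on `[0,∞]`, with `exp ∞ = ∞`. -/
noncomputable def expE (y : ℝ≥0∞) : ℝ≥0∞ :=
  if y = ⊤ then ⊤ else ENNReal.ofReal (Real.exp y.toReal)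

section helpers

variable {𝒳 : Type*} [MeasurableSpace 𝒳]

lemma measurable_prependPath (x : 𝒳) : Measurable (prependPath x) := by
  apply measurable_pi_lambda
  intro n
  cases n with
  | zero => exact measurable_const
  | succ k => exact measurable_pi_apply k

lemma measurable_update0 (x : 𝒳) :
    Measurable (fun ω : ℕ → 𝒳 => Function.update ω 0 x) := by
  apply measurable_pi_lambda
  intro n
  cases n with
  | zero => simp only [Function.update_self]; exact measurable_const
  | succ k =>
      simp only [Function.update_of_ne (Nat.succ_ne_zero k)]
      exact measurable_pi_apply _

lemma one_le_expE (y : ℝ≥0∞) : 1 ≤ expE y := by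
  unfold expE
  split
  · exact le_top
  · rw [show (1:ℝ≥0∞) = ENNReal.ofReal 1 by simp]
    exact ENNReal.ofReal_le_ofReal (Real.one_le_exp ENNReal.toReal_nonneg)

lemma expE_ne_zero (y : ℝ≥0∞) : expE y ≠ 0 :=
  fun h => by simpa [h] using one_le_expE y

lemma expE_ofReal {r : ℝ} (hr : 0 ≤ r) : expE (ENNReal.ofReal r) = ENNReal.ofReal (Real.exp r) := by
  unfold expE
  rw [if_neg ENNReal.ofReal_ne_top, ENNReal.toReal_ofReal hr]

lemma expE_top : expE ⊤ = ⊤ := if_pos rfl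

lemma expE_add (a b : ℝ≥0∞) : expE (a + b) = expE a * expE b := by
  rcases eq_or_ne a ⊤ with ha | ha
  · rw [ha, top_add, expE_top, ENNReal.top_mul (expE_ne_zero b)]
  · rcases eq_or_ne b ⊤ with hb | hb
    · rw [hb, add_top, expE_top, ENNReal.mul_top (expE_ne_zero a)]
    · unfold expE
      rw [if_neg (by simp [ENNReal.add_eq_top, ha, hb]), if_neg ha, if_neg hb,
        ENNReal.toReal_add ha hb, Real.exp_add,
        ENNReal.ofReal_mul (Real.exp_nonneg _)]

lemma expE_mono {a b : ℝ≥0∞} (h : a ≤ b) : expE a ≤ expE b := by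
  rcases eq_or_ne b ⊤ with hb | hb
  · simp [expE, hb]
  · have ha : a ≠ ⊤ := fun h' => hb (top_le_iff.mp (h' ▸ h))
    unfold expE
    rw [if_neg ha, if_neg hb]
    exact ENNReal.ofReal_le_ofReal (Real.exp_le_exp.mpr (ENNReal.toReal_mono hb h))

lemma measurable_expE : Measurable expE := by
  unfold expE
  exact Measurable.ite (measurableSet_singleton ⊤) measurable_const
    (ENNReal.measurable_ofReal.comp (Real.measurable_exp.comp ENNReal.measurable_toReal))

lemma pathSigma_le {m : ℕ} {C : Set 𝒳} {ω : ℕ → 𝒳} {j : ℕ} (h : ω (j * m) ∈ C) :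
    pathSigma m C ω ≤ j := sInf_le ⟨j, rfl, h⟩

lemma pathTau_le {m : ℕ} {C : Set 𝒳} {ω : ℕ → 𝒳} {j : ℕ} (h1 : 1 ≤ j) (h : ω (j * m) ∈ C) :
    pathTau m C ω ≤ j := sInf_le ⟨j, rfl, h1, h⟩

lemma one_le_pathTau (m : ℕ) (C : Set 𝒳) (ω : ℕ → 𝒳) : 1 ≤ pathTau m C ω := by
  refine le_sInf ?_
  rintro c ⟨j, rfl, h1, -⟩
  exact_mod_cast h1

lemma pathSigma_spec {m : ℕ} {C : Set 𝒳} {ω : ℕ → 𝒳} (h : pathSigma m C ω ≠ ⊤) :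
    ∃ j : ℕ, pathSigma m C ω = j ∧ ω (j * m) ∈ C := by
  classical
  have hex : ∃ j : ℕ, ω (j * m) ∈ C := by
    by_contra hc
    push_neg at hc
    apply h
    refine le_antisymm le_top (le_sInf ?_)
    rintro c ⟨j, rfl, hj⟩
    exact absurd hj (hc j)
  refine ⟨Nat.find hex, ?_, Nat.find_spec hex⟩
  refine le_antisymm (pathSigma_le (Nat.find_spec hex)) (le_sInf ?_)
  rintro c ⟨i, rfl, hi⟩
  exact_mod_cast Nat.find_le hi

lemma pathTau_spec {m : ℕ} {C : Set 𝒳} {ω : ℕ → 𝒳} (h : pathTau m C ω ≠ ⊤) :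
    ∃ j : ℕ, pathTau m C ω = j ∧ 1 ≤ j ∧ ω (j * m) ∈ C := by
  classical
  have hex : ∃ j : ℕ, 1 ≤ j ∧ ω (j * m) ∈ C := by
    by_contra hc
    push_neg at hc
    apply h
    refine le_antisymm le_top (le_sInf ?_)
    rintro c ⟨j, rfl, h1, hj⟩
    exact absurd hj (hc j h1)
  refine ⟨Nat.find hex, ?_, (Nat.find_spec hex).1, (Nat.find_spec hex).2⟩
  refine le_antisymm (pathTau_le (Nat.find_spec hex).1 (Nat.find_spec hex).2) (le_sInf ?_)
  rintro c ⟨i, rfl, h1, hi⟩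
  have : Nat.find hex ≤ i := Nat.find_le ⟨h1, hi⟩
  exact_mod_cast this

lemma pathTau_eq_shift (m : ℕ) (C : Set 𝒳) (ω : ℕ → 𝒳) :
    pathTau m C ω = pathSigma m C (fun n => ω (n + m)) + 1 := by
  apply le_antisymm
  · rcases eq_or_ne (pathSigma m C (fun n => ω (n + m))) ⊤ with hs | hs
    · rw [hs, top_add]; exact le_top
    · obtain ⟨j, hj, hjC⟩ := pathSigma_spec hs
      have hmem : ω ((j + 1) * m) ∈ C := by
        have : (j + 1) * m = j * m + m := by ring
        rw [this]; exact hjC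
      calc pathTau m C ω ≤ ((j + 1 : ℕ) : ℝ≥0∞) := pathTau_le (Nat.le_add_left 1 j) hmem
        _ = pathSigma m C (fun n => ω (n + m)) + 1 := by rw [hj]; push_cast; ring
  · refine le_sInf ?_
    rintro c ⟨j, rfl, h1, hj⟩
    obtain ⟨i, rfl⟩ := Nat.exists_eq_succ_of_ne_zero (Nat.one_le_iff_ne_zero.mp h1)
    have hmem : (fun n => ω (n + m)) (i * m) ∈ C := by
      have : i * m + m = (i + 1) * m := by ring
      simpa [this] using hj
    have : pathSigma m C (fun n => ω (n + m)) ≤ (i : ℝ≥0∞) := pathSigma_le hmem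
    calc pathSigma m C (fun n => ω (n + m)) + 1 ≤ (i : ℝ≥0∞) + 1 := add_le_add_left this 1
      _ = ((i + 1 : ℕ) : ℝ≥0∞) := by push_cast; ring

lemma measurable_pathSigma (m : ℕ) {C : Set 𝒳} (hC : MeasurableSet C) :
    Measurable (pathSigma m C) := by
  classical
  have : pathSigma m C = fun ω => ⨅ j : ℕ, if ω (j * m) ∈ C then (j : ℝ≥0∞) else ⊤ := by
    funext ω
    apply le_antisymm
    · refine le_iInf fun j => ?_
      split
      · exact pathSigma_le ‹_›
      · exact le_top
    · refine le_sInf ?_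
      rintro c ⟨j, rfl, hj⟩
      exact (iInf_le _ j).trans (by rw [if_pos hj])
  rw [this]
  refine Measurable.iInf fun j => Measurable.ite ?_ measurable_const measurable_const
  exact (measurable_pi_apply (j * m)) hC

lemma measurable_pathTau (m : ℕ) {C : Set 𝒳} (hC : MeasurableSet C) :
    Measurable (pathTau m C) := by
  classical
  have : pathTau m C = fun ω => ⨅ j : ℕ, if 1 ≤ j ∧ ω (j * m) ∈ C then (j : ℝ≥0∞) else ⊤ := by
    funext ω
    apply le_antisymm
    · refine le_iInf fun j => ?_
      split
      · exact pathTau_le ‹1 ≤ j ∧ _›.1 ‹1 ≤ j ∧ _›.2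
      · exact le_top
    · refine le_sInf ?_
      rintro c ⟨j, rfl, h1, hj⟩
      exact (iInf_le _ j).trans (by rw [if_pos ⟨h1, hj⟩])
  rw [this]
  refine Measurable.iInf fun j => Measurable.ite ?_ measurable_const measurable_const
  have : {ω : ℕ → 𝒳 | 1 ≤ j ∧ ω (j * m) ∈ C} = if 1 ≤ j then {ω : ℕ → 𝒳 | ω (j * m) ∈ C} else ∅ := by
    split <;> ext ω <;> simp_all
  rw [this]
  split
  · exact (measurable_pi_apply (j * m)) hC
  · exact MeasurableSet.empty

end helpers

section markov

variable {𝒳 : Type*} [MeasurableSpace 𝒳]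

lemma lintegral_Pa (κ : Kernel 𝒳 𝒳) (Pa : 𝒳 → Measure (ℕ → 𝒳))
    (hPa_meas : Measurable Pa)
    (hPa : ∀ x, Pa x = (κ x).bind fun y => (Pa y).map (prependPath x))
    (x : 𝒳) {F : (ℕ → 𝒳) → ℝ≥0∞} (hF : Measurable F) :
    ∫⁻ ω, F ω ∂ Pa x = ∫⁻ y, ∫⁻ ω, F (prependPath x ω) ∂ Pa y ∂ κ x := by
  conv_lhs => rw [hPa x]
  have hmap : Measurable fun y => (Pa y).map (prependPath x) :=
    (Measure.measurable_map _ (measurable_prependPath x)).comp hPa_meas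
  rw [Measure.lintegral_bind hmap.aemeasurable hF.aemeasurable]
  exact lintegral_congr fun y => lintegral_map hF (measurable_prependPath x)

lemma lintegral_Pa_update (κ : Kernel 𝒳 𝒳) (Pa : 𝒳 → Measure (ℕ → 𝒳))
    (hPa_meas : Measurable Pa)
    (hPa : ∀ x, Pa x = (κ x).bind fun y => (Pa y).map (prependPath x))
    (x : 𝒳) {F : (ℕ → 𝒳) → ℝ≥0∞} (hF : Measurable F) :
    ∫⁻ ω, F ω ∂ Pa x = ∫⁻ ω, F (Function.update ω 0 x) ∂ Pa x := by
  have hF' : Measurable fun ω : ℕ → 𝒳 => F (Function.update ω 0 x) :=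
    hF.comp (measurable_update0 x)
  rw [lintegral_Pa κ Pa hPa_meas hPa x hF, lintegral_Pa κ Pa hPa_meas hPa x hF']
  refine lintegral_congr fun y => lintegral_congr fun ω => ?_
  have : Function.update (prependPath x ω) 0 x = prependPath x ω := by
    funext n
    cases n with
    | zero => simp [prependPath]
    | succ k => simp [prependPath, Function.update_of_ne (Nat.succ_ne_zero k)]
  rw [this]

lemma lintegral_Pa_markov (κ : Kernel 𝒳 𝒳) [IsMarkovKernel κ]
    (Pa : 𝒳 → Measure (ℕ → 𝒳)) [∀ x, IsProbabilityMeasure (Pa x)]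
    (hPa_meas : Measurable Pa)
    (hPa : ∀ x, Pa x = (κ x).bind fun y => (Pa y).map (prependPath x))
    {F : (ℕ → 𝒳) → ℝ≥0∞} (hF : Measurable F) :
    ∀ (n : ℕ) (x : 𝒳), ∫⁻ ω, (∫⁻ ω', F ω' ∂ Pa (ω n)) ∂ Pa x
      = ∫⁻ ω, F (fun k => ω (k + n)) ∂ Pa x := by
  intro n
  induction n with
  | zero =>
    intro x
    have h0 : Measurable fun ω : ℕ → 𝒳 => (∫⁻ ω', F ω' ∂ Pa (ω 0)) :=
      (Measure.measurable_lintegral hF).comp (hPa_meas.comp (measurable_pi_apply 0))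
    rw [lintegral_Pa κ Pa hPa_meas hPa x h0]
    have h1 : ∫⁻ y, ∫⁻ ω, (∫⁻ ω', F ω' ∂ Pa ((prependPath x ω) 0)) ∂ Pa y ∂ κ x
        = ∫⁻ ω', F ω' ∂ Pa x := by
      have : ∀ y : 𝒳, ∫⁻ ω, (∫⁻ ω', F ω' ∂ Pa ((prependPath x ω) 0)) ∂ Pa y
          = ∫⁻ ω', F ω' ∂ Pa x := by
        intro y
        have : (fun ω : ℕ → 𝒳 => (∫⁻ ω', F ω' ∂ Pa ((prependPath x ω) 0)))
            = fun _ : ℕ → 𝒳 => ∫⁻ ω', F ω' ∂ Pa x := rfl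
        rw [this, lintegral_const, measure_univ, mul_one]
      rw [lintegral_congr this, lintegral_const, measure_univ, mul_one]
    rw [h1]
    exact lintegral_congr fun ω => rfl
  | succ n ih =>
    intro x
    have hsn : Measurable fun ω : ℕ → 𝒳 => (∫⁻ ω', F ω' ∂ Pa (ω (n + 1))) :=
      (Measure.measurable_lintegral hF).comp (hPa_meas.comp (measurable_pi_apply (n + 1)))
    have hshift : Measurable fun ω : ℕ → 𝒳 => F (fun k => ω (k + (n + 1))) :=
      hF.comp (measurable_pi_lambda _ fun k => measurable_pi_apply (k + (n + 1)))
    rw [lintegral_Pa κ Pa hPa_meas hPa x hsn]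
    conv_rhs => rw [lintegral_Pa κ Pa hPa_meas hPa x hshift]
    refine lintegral_congr fun y => ?_
    have h2 : (fun ω : ℕ → 𝒳 => (∫⁻ ω', F ω' ∂ Pa ((prependPath x ω) (n + 1))))
        = fun ω : ℕ → 𝒳 => (∫⁻ ω', F ω' ∂ Pa (ω n)) := rfl
    rw [h2, ih y]
    exact lintegral_congr fun ω => rfl

end markov

noncomputable def sumSigma {𝒳 : Type*} (m : ℕ) (C : Set 𝒳) (g : 𝒳 → ℝ) (ω : ℕ → 𝒳) : ℝ≥0∞ :=
  ∑' k : ℕ, if (k : ℝ≥0∞) ≤ pathSigma m C ω then ENNReal.ofReal (g (ω (k * m))) else 0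

noncomputable def sumTau {𝒳 : Type*} (m : ℕ) (C : Set 𝒳) (g : 𝒳 → ℝ) (ω : ℕ → 𝒳) : ℝ≥0∞ :=
  ∑' k : ℕ, if (k : ℝ≥0∞) < pathTau m C ω then ENNReal.ofReal (g (ω (k * m))) else 0

noncomputable def sumShift {𝒳 : Type*} (m : ℕ) (C : Set 𝒳) (g : 𝒳 → ℝ) (ω : ℕ → 𝒳) : ℝ≥0∞ :=
  ∑' k : ℕ, if (k : ℝ≥0∞) + 1 ≤ pathTau m C ω then ENNReal.ofReal (g (ω (k * m + m))) else 0

noncomputable def sumRest {𝒳 : Type*} (m : ℕ) (C : Set 𝒳) (g : 𝒳 → ℝ) (ω : ℕ → 𝒳) : ℝ≥0∞ :=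
  ∑' k : ℕ, if (k : ℝ≥0∞) + 1 < pathTau m C ω then ENNReal.ofReal (g (ω (k * m + m))) else 0

section sums

variable {𝒳 : Type*} [MeasurableSpace 𝒳] {C : Set 𝒳} {x : 𝒳} {g : 𝒳 → ℝ} {m : ℕ}


lemma sumSigma_shift (m : ℕ) (C : Set 𝒳) (g : 𝒳 → ℝ) (ω : ℕ → 𝒳) :
    sumSigma m C g (fun n => ω (n + m)) = sumShift m C g ω := by
  unfold sumSigma sumShift
  refine tsum_congr fun k => ?_
  have h1 : ((k : ℝ≥0∞) ≤ pathSigma m C (fun n => ω (n + m)))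
      ↔ ((k : ℝ≥0∞) + 1 ≤ pathTau m C ω) := by
    rw [pathTau_eq_shift m C ω]
    exact (ENNReal.add_le_add_iff_right ENNReal.one_ne_top).symm
  exact if_congr h1 rfl rfl


lemma pathSigma_update_mem (m : ℕ) (hx : x ∈ C) (ω : ℕ → 𝒳) :
    pathSigma m C (Function.update ω 0 x) = 0 := by
  classical
  refine le_antisymm ?_ (zero_le')
  have h : (Function.update ω 0 x) (0 * m) ∈ C := by
    rw [Nat.zero_mul, Function.update_self]; exact hx
  simpa using pathSigma_le h


lemma sumSigma_update_mem (m : ℕ) (g : 𝒳 → ℝ) (hx : x ∈ C) (ω : ℕ → 𝒳) :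
    sumSigma m C g (Function.update ω 0 x) = ENNReal.ofReal (g x) := by
  classical
  unfold sumSigma
  rw [pathSigma_update_mem m hx]
  rw [tsum_eq_single 0 ?_]
  · rw [if_pos (by simp), Nat.zero_mul, Function.update_self]
  · intro k hk
    rw [if_neg]
    simp only [nonpos_iff_eq_zero, Nat.cast_eq_zero]
    exact hk


lemma pathTau_update (hm : 1 ≤ m) (x : 𝒳) (ω : ℕ → 𝒳) :
    pathTau m C (Function.update ω 0 x) = pathTau m C ω := by
  classical
  unfold pathTau
  congr 1
  ext c
  constructor
  · rintro ⟨j, rfl, h1, hj⟩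
    refine ⟨j, rfl, h1, ?_⟩
    have hne : j * m ≠ 0 := Nat.mul_ne_zero (Nat.one_le_iff_ne_zero.mp h1)
      (Nat.one_le_iff_ne_zero.mp hm)
    rwa [Function.update_of_ne hne] at hj
  · rintro ⟨j, rfl, h1, hj⟩
    refine ⟨j, rfl, h1, ?_⟩
    have hne : j * m ≠ 0 := Nat.mul_ne_zero (Nat.one_le_iff_ne_zero.mp h1)
      (Nat.one_le_iff_ne_zero.mp hm)
    rwa [Function.update_of_ne hne]


lemma pathSigma_update_not_mem (hm : 1 ≤ m) (hx : x ∉ C) (ω : ℕ → 𝒳) :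
    pathSigma m C (Function.update ω 0 x) = pathTau m C (Function.update ω 0 x) := by
  classical
  unfold pathSigma pathTau
  congr 1
  ext c
  constructor
  · rintro ⟨j, rfl, hj⟩
    refine ⟨j, rfl, ?_, hj⟩
    rcases Nat.eq_zero_or_pos j with h0 | h1
    · exfalso
      subst h0
      rw [Nat.zero_mul, Function.update_self] at hj
      exact hx hj
    · exact h1
  · rintro ⟨j, rfl, h1, hj⟩
    exact ⟨j, rfl, hj⟩


lemma sumSigma_update_not_mem (hm : 1 ≤ m) (g : 𝒳 → ℝ) (hx : x ∉ C) (ω : ℕ → 𝒳) :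
    sumSigma m C g (Function.update ω 0 x) = ENNReal.ofReal (g x) + sumShift m C g ω := by
  classical
  unfold sumSigma sumShift
  rw [pathSigma_update_not_mem hm hx, pathTau_update hm]
  rw [tsum_eq_zero_add' ENNReal.summable]
  congr 1
  · rw [if_pos (by simp), Nat.zero_mul, Function.update_self]
  · refine tsum_congr fun k => ?_
    have hcast : (((k + 1 : ℕ)) : ℝ≥0∞) = (k : ℝ≥0∞) + 1 := by push_cast; ring
    rw [hcast]
    refine if_congr Iff.rfl ?_ rfl
    have hne : (k + 1) * m ≠ 0 :=
      Nat.mul_ne_zero (Nat.succ_ne_zero k) (Nat.one_le_iff_ne_zero.mp hm)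
    rw [Function.update_of_ne hne]
    have hidx : (k + 1) * m = k * m + m := by ring
    rw [hidx]


lemma le_sumTau (m : ℕ) (C : Set 𝒳) (g : 𝒳 → ℝ) (ω : ℕ → 𝒳) :
    ENNReal.ofReal (g (ω 0)) ≤ sumTau m C g ω := by
  classical
  unfold sumTau
  have h0 : (if ((0 : ℕ) : ℝ≥0∞) < pathTau m C ω then ENNReal.ofReal (g (ω (0 * m))) else 0)
      = ENNReal.ofReal (g (ω 0)) := by
    rw [if_pos, Nat.zero_mul]
    simpa using lt_of_lt_of_le (zero_lt_one) (one_le_pathTau m C ω)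
  calc ENNReal.ofReal (g (ω 0)) = _ := h0.symm
    _ ≤ _ := ENNReal.le_tsum (f := fun k : ℕ =>
      if (k : ℝ≥0∞) < pathTau m C ω then ENNReal.ofReal (g (ω (k * m))) else 0) 0


lemma sumShift_le_rest {L : ℝ} (hgL : ∀ y ∈ C, g y ≤ L) (ω : ℕ → 𝒳) :
    sumShift m C g ω ≤ ENNReal.ofReal L + sumRest m C g ω := by
  classical
  unfold sumShift sumRest
  rcases eq_or_ne (pathTau m C ω) ⊤ with ht | ht
  · rw [ht]
    have heq : ∀ k : ℕ, (if (k : ℝ≥0∞) + 1 ≤ ⊤ then ENNReal.ofReal (g (ω (k * m + m))) else 0)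
        = (if (k : ℝ≥0∞) + 1 < ⊤ then ENNReal.ofReal (g (ω (k * m + m))) else 0) := by
      intro k
      rw [if_pos le_top, if_pos]
      exact lt_top_iff_ne_top.mpr (by simp)
    rw [tsum_congr heq]
    exact le_add_left le_rfl
  · obtain ⟨j, htj, h1, hjC⟩ := pathTau_spec ht
    obtain ⟨i, rfl⟩ := Nat.exists_eq_succ_of_ne_zero (Nat.one_le_iff_ne_zero.mp h1)
    have key : ∀ k : ℕ,
        (if (k : ℝ≥0∞) + 1 ≤ pathTau m C ω then ENNReal.ofReal (g (ω (k * m + m))) else 0)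
        = (if (k : ℝ≥0∞) + 1 < pathTau m C ω then ENNReal.ofReal (g (ω (k * m + m))) else 0)
          + (if k = i then ENNReal.ofReal (g (ω (k * m + m))) else 0) := by
      intro k
      rw [htj]
      have hc1 : ((k : ℝ≥0∞) + 1) = (((k + 1 : ℕ)) : ℝ≥0∞) := by push_cast; ring
      have hle : ((k : ℝ≥0∞) + 1 ≤ (((i + 1 : ℕ)) : ℝ≥0∞)) ↔ k + 1 ≤ i + 1 := by
        rw [hc1, Nat.cast_le]
      have hlt : ((k : ℝ≥0∞) + 1 < (((i + 1 : ℕ)) : ℝ≥0∞)) ↔ k + 1 < i + 1 := by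
        rw [hc1, Nat.cast_lt]
      rcases lt_trichotomy (k + 1) (i + 1) with hc | hc | hc
      · rw [if_pos (hle.mpr hc.le), if_pos (hlt.mpr hc), if_neg (by omega), add_zero]
      · have hk : k = i := by omega
        rw [if_pos (hle.mpr hc.le), if_neg (by rw [hlt]; omega), if_pos hk, zero_add]
      · rw [if_neg (by rw [hle]; omega), if_neg (by rw [hlt]; omega), if_neg (by omega), add_zero]
    rw [tsum_congr key, ENNReal.tsum_add, tsum_eq_single i (fun j hj => if_neg hj), if_pos rfl]
    rw [add_comm]
    refine add_le_add ?_ le_rfl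
    refine ENNReal.ofReal_le_ofReal ?_
    apply hgL
    have hidx : i * m + m = (i + 1) * m := by ring
    rw [hidx]
    exact hjC


lemma sumRest_le (m : ℕ) (C : Set 𝒳) (g : 𝒳 → ℝ) (ω : ℕ → 𝒳) :
    sumRest m C g ω ≤ sumTau m C g ω := by
  classical
  unfold sumRest sumTau
  rw [tsum_eq_zero_add' (f := fun k : ℕ =>
    if (k : ℝ≥0∞) < pathTau m C ω then ENNReal.ofReal (g (ω (k * m))) else 0) ENNReal.summable]
  refine le_add_of_nonneg_of_le (zero_le') (le_of_eq (tsum_congr fun k => ?_))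
  have hcast : (((k + 1 : ℕ)) : ℝ≥0∞) = (k : ℝ≥0∞) + 1 := by push_cast; ring
  have hidx : (k + 1) * m = k * m + m := by ring
  rw [hcast, hidx]

lemma measurable_sumSigma (m : ℕ) (hC : MeasurableSet C) (hgm : Measurable g) :
    Measurable (sumSigma m C g) := by
  unfold sumSigma
  refine Measurable.ennreal_tsum fun k => ?_
  refine Measurable.ite ?_
    (ENNReal.measurable_ofReal.comp (hgm.comp (measurable_pi_apply (k * m)))) measurable_const
  exact measurableSet_le measurable_const (measurable_pathSigma m hC)

lemma measurable_sumTau (m : ℕ) (hC : MeasurableSet C) (hgm : Measurable g) :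
    Measurable (sumTau m C g) := by
  unfold sumTau
  refine Measurable.ennreal_tsum fun k => ?_
  refine Measurable.ite ?_
    (ENNReal.measurable_ofReal.comp (hgm.comp (measurable_pi_apply (k * m)))) measurable_const
  exact measurableSet_lt measurable_const (measurable_pathTau m hC)

lemma measurable_sumShift (m : ℕ) (hC : MeasurableSet C) (hgm : Measurable g) :
    Measurable (sumShift m C g) := by
  unfold sumShift
  refine Measurable.ennreal_tsum fun k => ?_
  refine Measurable.ite ?_
    (ENNReal.measurable_ofReal.comp (hgm.comp (measurable_pi_apply (k * m + m)))) measurable_const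
  exact measurableSet_le measurable_const (measurable_pathTau m hC)

lemma measurable_sumRest (m : ℕ) (hC : MeasurableSet C) (hgm : Measurable g) :
    Measurable (sumRest m C g) := by
  unfold sumRest
  refine Measurable.ennreal_tsum fun k => ?_
  refine Measurable.ite ?_
    (ENNReal.measurable_ofReal.comp (hgm.comp (measurable_pi_apply (k * m + m)))) measurable_const
  exact measurableSet_lt measurable_const (measurable_pathTau m hC)

end sums

/-- Theorem (converse direction: integrability of the excursion gives the multiplicative
drift condition): if `d = sup_{x∈C} E_x exp(Σ_{k=0}^{τ_C−1} g(X_{km})) < ∞` and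
`G_C(x,g) = E_x exp(Σ_{k=0}^{σ_C} g(X_{km})) < ∞` for all `x`, then
`V(x) = log G_C(x,g)` satisfies `P^m(e^V)(x) ≤ exp(V(x) − g(x) + 2 log d · 1_C(x))`
and `V ≤ log d` on `C`.  Here `Pa x` is the Ionescu–Tulcea path measure of the canonical
chain started at `x`, characterized by the recursion `hPa`. -/
theorem stmt_16 {𝒳 : Type*} [MeasurableSpace 𝒳]
    (κ : Kernel 𝒳 𝒳) [IsMarkovKernel κ]
    (Pa : 𝒳 → Measure (ℕ → 𝒳)) [∀ x, IsProbabilityMeasure (Pa x)]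
    (hPa_meas : Measurable Pa)
    (hPa : ∀ x, Pa x = (κ x).bind fun y => (Pa y).map (prependPath x))
    (m : ℕ) (hm : 1 ≤ m)
    (g : 𝒳 → ℝ) (hgm : Measurable g) (hg0 : ∀ x, 0 ≤ g x)
    (C : Set 𝒳) (hC : MeasurableSet C)
    (G : 𝒳 → ℝ≥0∞)
    (hG : ∀ x, G x = ∫⁻ ω, expE (∑' k : ℕ,
        if (k : ℝ≥0∞) ≤ pathSigma m C ω then ENNReal.ofReal (g (ω (k * m))) else 0) ∂(Pa x))
    (hGfin : ∀ x, G x ≠ ⊤)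
    (d : ℝ≥0∞)
    (hd : d = ⨆ x ∈ C, ∫⁻ ω, expE (∑' k : ℕ,
        if (k : ℝ≥0∞) < pathTau m C ω then ENNReal.ofReal (g (ω (k * m))) else 0) ∂(Pa x))
    (hdfin : d ≠ ⊤)
    (V : 𝒳 → ℝ) (hV : ∀ x, V x = Real.log (G x).toReal) :
    (∀ x, ∫⁻ ω, ENNReal.ofReal (Real.exp (V (ω m))) ∂(Pa x)
        ≤ ENNReal.ofReal (Real.exp (V x - g x +
            2 * Real.log d.toReal * Set.indicator C (fun _ => 1) x))) ∧
    (∀ x ∈ C, V x ≤ Real.log d.toReal) := by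
  classical
  have hG' : ∀ x, G x = ∫⁻ ω, expE (sumSigma m C g ω) ∂(Pa x) := hG
  have hd' : d = ⨆ x ∈ C, ∫⁻ ω, expE (sumTau m C g ω) ∂(Pa x) := hd
  have hmΦ : Measurable fun ω : ℕ → 𝒳 => expE (sumSigma m C g ω) :=
    measurable_expE.comp (measurable_sumSigma m hC hgm)
  have hmT : Measurable fun ω : ℕ → 𝒳 => expE (sumTau m C g ω) :=
    measurable_expE.comp (measurable_sumTau m hC hgm)
  have hmS : Measurable fun ω : ℕ → 𝒳 => expE (sumShift m C g ω) :=
    measurable_expE.comp (measurable_sumShift m hC hgm)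
  have hmR : Measurable fun ω : ℕ → 𝒳 => expE (sumRest m C g ω) :=
    measurable_expE.comp (measurable_sumRest m hC hgm)
  -- d dominates exp (g x) on C
  have h_d_ge : ∀ x ∈ C, ENNReal.ofReal (Real.exp (g x)) ≤ d := by
    intro x hx
    have step1 : ENNReal.ofReal (Real.exp (g x)) ≤ ∫⁻ ω, expE (sumTau m C g ω) ∂ Pa x := by
      have hupd : ∫⁻ ω, expE (sumTau m C g ω) ∂ Pa x
          = ∫⁻ ω, expE (sumTau m C g (Function.update ω 0 x)) ∂ Pa x :=
        lintegral_Pa_update κ Pa hPa_meas hPa x hmT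
      rw [hupd]
      calc ENNReal.ofReal (Real.exp (g x))
          = ∫⁻ _, ENNReal.ofReal (Real.exp (g x)) ∂ Pa x := by
            rw [lintegral_const, measure_univ, mul_one]
        _ ≤ _ := by
            refine lintegral_mono fun ω => ?_
            rw [← expE_ofReal (hg0 x)]
            refine expE_mono ?_
            have h := le_sumTau m C g (Function.update ω 0 x)
            simpa [Function.update_self] using h
    rw [hd']
    exact le_trans step1
      (le_biSup (f := fun x => ∫⁻ ω, expE (sumTau m C g ω) ∂ Pa x) hx)
  have hgd : ∀ y ∈ C, g y ≤ Real.log d.toReal := by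
    intro y hy
    have h1 : Real.exp (g y) ≤ d.toReal :=
      (ENNReal.ofReal_le_iff_le_toReal hdfin).mp (h_d_ge y hy)
    have h2 : 0 < d.toReal := lt_of_lt_of_le (Real.exp_pos _) h1
    exact (Real.le_log_iff_exp_le h2).mpr h1
  have hG1 : ∀ y, (1 : ℝ≥0∞) ≤ G y := by
    intro y
    rw [hG' y]
    calc (1 : ℝ≥0∞) = ∫⁻ _, 1 ∂ Pa y := by rw [lintegral_one, measure_univ]
      _ ≤ _ := lintegral_mono fun ω => one_le_expE _
  have hVG : ∀ y, ENNReal.ofReal (Real.exp (V y)) = G y := by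
    intro y
    have h1 : (1 : ℝ) ≤ (G y).toReal := by
      have := ENNReal.toReal_mono (hGfin y) (hG1 y)
      simpa using this
    rw [hV y, Real.exp_log (by linarith), ENNReal.ofReal_toReal (hGfin y)]
  have hGC : ∀ x ∈ C, G x = ENNReal.ofReal (Real.exp (g x)) := by
    intro x hx
    calc G x = ∫⁻ ω, expE (sumSigma m C g ω) ∂ Pa x := hG' x
      _ = ∫⁻ ω, expE (sumSigma m C g (Function.update ω 0 x)) ∂ Pa x :=
          lintegral_Pa_update κ Pa hPa_meas hPa x hmΦ
      _ = ∫⁻ _, ENNReal.ofReal (Real.exp (g x)) ∂ Pa x :=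
          lintegral_congr fun ω => by
            rw [sumSigma_update_mem m g hx, expE_ofReal (hg0 x)]
      _ = ENNReal.ofReal (Real.exp (g x)) := by rw [lintegral_const, measure_univ, mul_one]
  have hVC : ∀ x ∈ C, V x = g x := by
    intro x hx
    rw [hV x, hGC x hx, ENNReal.toReal_ofReal (Real.exp_nonneg _), Real.log_exp]
  have hLHS : ∀ x, ∫⁻ ω, ENNReal.ofReal (Real.exp (V (ω m))) ∂ Pa x
      = ∫⁻ ω, expE (sumShift m C g ω) ∂ Pa x := by
    intro x
    calc ∫⁻ ω, ENNReal.ofReal (Real.exp (V (ω m))) ∂ Pa x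
        = ∫⁻ ω, (∫⁻ ω', expE (sumSigma m C g ω') ∂ Pa (ω m)) ∂ Pa x :=
          lintegral_congr fun ω => by rw [hVG (ω m), hG' (ω m)]
      _ = ∫⁻ ω, expE (sumSigma m C g (fun k => ω (k + m))) ∂ Pa x :=
          lintegral_Pa_markov κ Pa hPa_meas hPa hmΦ m x
      _ = ∫⁻ ω, expE (sumShift m C g ω) ∂ Pa x :=
          lintegral_congr fun ω => congrArg expE (sumSigma_shift m C g ω)
  refine ⟨?_, fun x hx => (hVC x hx) ▸ hgd x hx⟩
  intro x
  by_cases hx : x ∈ C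
  · -- x ∈ C
    have hd1 : (1 : ℝ≥0∞) ≤ d := by
      refine le_trans ?_ (h_d_ge x hx)
      exact ENNReal.one_le_ofReal.mpr (Real.one_le_exp (hg0 x))
    have hdt1 : (1 : ℝ) ≤ d.toReal := by
      have := ENNReal.toReal_mono hdfin hd1
      simpa using this
    have hdt0 : (0 : ℝ) < d.toReal := by linarith
    have hlog0 : 0 ≤ Real.log d.toReal := Real.log_nonneg hdt1
    have hbound : ∫⁻ ω, expE (sumShift m C g ω) ∂ Pa x ≤ d * d := by
      have step1 : ∫⁻ ω, expE (sumShift m C g ω) ∂ Pa x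
          ≤ ∫⁻ ω, ENNReal.ofReal d.toReal * expE (sumRest m C g ω) ∂ Pa x := by
        refine lintegral_mono fun ω => ?_
        calc expE (sumShift m C g ω)
            ≤ expE (ENNReal.ofReal (Real.log d.toReal) + sumRest m C g ω) :=
              expE_mono (sumShift_le_rest hgd ω)
          _ = ENNReal.ofReal (Real.exp (Real.log d.toReal)) * expE (sumRest m C g ω) := by
              rw [expE_add, expE_ofReal hlog0]
          _ = ENNReal.ofReal d.toReal * expE (sumRest m C g ω) := by rw [Real.exp_log hdt0]
      have step2 : ∫⁻ ω, ENNReal.ofReal d.toReal * expE (sumRest m C g ω) ∂ Pa x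
          = ENNReal.ofReal d.toReal * ∫⁻ ω, expE (sumRest m C g ω) ∂ Pa x :=
        lintegral_const_mul _ hmR
      have step3 : ∫⁻ ω, expE (sumRest m C g ω) ∂ Pa x ≤ ∫⁻ ω, expE (sumTau m C g ω) ∂ Pa x :=
        lintegral_mono fun ω => expE_mono (sumRest_le m C g ω)
      have step4 : ∫⁻ ω, expE (sumTau m C g ω) ∂ Pa x ≤ d := by
        rw [hd']
        exact le_biSup (f := fun x => ∫⁻ ω, expE (sumTau m C g ω) ∂ Pa x) hx
      calc ∫⁻ ω, expE (sumShift m C g ω) ∂ Pa x ≤ _ := step1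
        _ = ENNReal.ofReal d.toReal * ∫⁻ ω, expE (sumRest m C g ω) ∂ Pa x := step2
        _ ≤ ENNReal.ofReal d.toReal * d := mul_le_mul_right (step3.trans step4) _
        _ = d * d := by rw [ENNReal.ofReal_toReal hdfin]
    rw [hLHS x, Set.indicator_of_mem hx, hVC x hx]
    have hRHS : ENNReal.ofReal (Real.exp (g x - g x + 2 * Real.log d.toReal * 1)) = d * d := by
      have h1 : g x - g x + 2 * Real.log d.toReal * 1 = Real.log d.toReal + Real.log d.toReal := by
        ring
      rw [h1, Real.exp_add, Real.exp_log hdt0, ENNReal.ofReal_mul hdt0.le,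
        ENNReal.ofReal_toReal hdfin]
    rw [hRHS]
    exact hbound
  · -- x ∉ C
    have hGx : G x = ENNReal.ofReal (Real.exp (g x)) * ∫⁻ ω, expE (sumShift m C g ω) ∂ Pa x := by
      calc G x = ∫⁻ ω, expE (sumSigma m C g ω) ∂ Pa x := hG' x
        _ = ∫⁻ ω, expE (sumSigma m C g (Function.update ω 0 x)) ∂ Pa x :=
            lintegral_Pa_update κ Pa hPa_meas hPa x hmΦ
        _ = ∫⁻ ω, ENNReal.ofReal (Real.exp (g x)) * expE (sumShift m C g ω) ∂ Pa x :=
            lintegral_congr fun ω => by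
              rw [sumSigma_update_not_mem hm g hx, expE_add, expE_ofReal (hg0 x)]
        _ = ENNReal.ofReal (Real.exp (g x)) * ∫⁻ ω, expE (sumShift m C g ω) ∂ Pa x :=
            lintegral_const_mul _ hmS
    have hc0 : ENNReal.ofReal (Real.exp (g x)) ≠ 0 := by
      rw [Ne, ENNReal.ofReal_eq_zero]
      exact not_le.mpr (Real.exp_pos _)
    have hct : ENNReal.ofReal (Real.exp (g x)) ≠ ⊤ := ENNReal.ofReal_ne_top
    have hc2 : ENNReal.ofReal (Real.exp (g x)) * ENNReal.ofReal (Real.exp (V x - g x)) = G x := by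
      rw [← ENNReal.ofReal_mul (Real.exp_nonneg _), ← Real.exp_add]
      have h1 : g x + (V x - g x) = V x := by ring
      rw [h1, hVG x]
    have hkey : ∫⁻ ω, expE (sumShift m C g ω) ∂ Pa x
        = ENNReal.ofReal (Real.exp (V x - g x)) := by
      refine (ENNReal.mul_right_inj hc0 hct).mp ?_
      rw [← hGx, hc2]
    rw [hLHS x, hkey, Set.indicator_of_notMem hx]
    simp
end
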